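/- arXiv:2407.02677 — 8 statements merged into one kernel-verified Lean document; each statement's English description precedes it below -/
import Mathlib

section
/- Let A be a complex unital Banach algebra, let N ≥ 1, and let X_1, …, X_N ∈ A. Define E_1 = Σ_{i=1}^N X_i, E_2 = (1/2)·Σ_{i=1}^{N−1} Σ_{j=i+1}^{N} [X_i, X_j], and E_3 = (1/12)·Σ_{i=1}^{N} Σ_{j=1, j≠i}^{N} [X_i,[X_i,X_j]] + (1/6)·Σ_{i=1}^{N−2} Σ_{j=i+1}^{N−1} Σ_{k=j+1}^{N} ( [X_i,[X_j,X_k]] + [[X_i,X_j],X_k] ). Then, as real t → 0, ‖exp(t X_1) · exp(t X_2) ⋯ exp(t X_N) − exp( t·E_1 + t²·E_2 + t³·E_3 )‖ = O(|t|⁴). (This is the N-term Baker–Campbell–Hausdorff expansion truncated after third order.) -/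
open scoped BigOperators


set_option linter.unusedSectionVars false
set_option maxHeartbeats 1000000

open Finset Asymptotics NormedSpace Nat Filter

section BCHAux
variable {A : Type*} [NormedRing A] [NormedAlgebra ℂ A] [CompleteSpace A]

lemma fact_ge (i : ℕ) : (24 : ℝ) * 2^i ≤ (i+4) ! := by
  induction i with
  | zero => norm_num [Nat.factorial]
  | succ n ih =>
      have h : ((n+5) ! : ℝ) = ((n:ℝ)+5) * ((n+4) ! : ℝ) := by
        rw [show n+5 = (n+4)+1 from rfl, Nat.factorial_succ]; push_cast; ring
      have hpos : (0:ℝ) ≤ ((n+4) ! : ℝ) := by positivity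
      have h5 : (2:ℝ) ≤ (n:ℝ)+5 := by linarith [Nat.cast_nonneg (α := ℝ) n]
      calc (24:ℝ) * 2^(n+1) = 2 * (24 * 2^n) := by ring
        _ ≤ 2 * ((n+4) ! : ℝ) := by linarith
        _ ≤ ((n:ℝ)+5) * ((n+4) ! : ℝ) := by nlinarith
        _ = ((n+5) ! : ℝ) := h.symm


lemma exp_cubic_approx (a : A) (ha : ‖a‖ ≤ 1) :
    ‖exp a - (1 + a + (2:ℂ)⁻¹ • (a*a) + (6:ℂ)⁻¹ • (a*(a*a)))‖ ≤ 3 * ‖a‖^4 := by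
  have hsum : Summable fun n : ℕ => ((n ! : ℂ))⁻¹ • a ^ n := expSeries_summable' a
  have hns : Summable fun n : ℕ => ‖((n ! : ℂ))⁻¹ • a ^ n‖ := norm_expSeries_summable' a
  have hshift := (hsum.sum_add_tsum_nat_add 4).symm
  have hpart : ∑ i ∈ Finset.range 4, ((i ! : ℂ))⁻¹ • a ^ i
      = 1 + a + (2:ℂ)⁻¹ • (a*a) + (6:ℂ)⁻¹ • (a*(a*a)) := by
    simp [Finset.sum_range_succ, Nat.factorial, pow_succ, mul_assoc]
  have hexp : exp a = ∑' n : ℕ, ((n ! : ℂ))⁻¹ • a ^ n := by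
    rw [exp_eq_tsum ℂ]
  rw [hexp, hshift, hpart]
  have : (1 + a + (2:ℂ)⁻¹ • (a*a) + (6:ℂ)⁻¹ • (a*(a*a))) + (∑' i : ℕ, (((i+4) !:ℂ))⁻¹ • a ^ (i+4))
      - (1 + a + (2:ℂ)⁻¹ • (a*a) + (6:ℂ)⁻¹ • (a*(a*a))) = ∑' i : ℕ, (((i+4) !:ℂ))⁻¹ • a ^ (i+4) := by
    abel
  rw [this]
  have hns4 : Summable fun i : ℕ => ‖(((i+4) !:ℂ))⁻¹ • a ^ (i+4)‖ :=
    (summable_nat_add_iff 4).mpr hns |>.congr (fun i => rfl)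
  calc ‖∑' i : ℕ, (((i+4) !:ℂ))⁻¹ • a ^ (i+4)‖
      ≤ ∑' i : ℕ, ‖(((i+4) !:ℂ))⁻¹ • a ^ (i+4)‖ := norm_tsum_le_tsum_norm hns4
    _ ≤ ∑' i : ℕ, (1/24) * (1/2)^i * ‖a‖^4 := by
        refine Summable.tsum_le_tsum (fun i => ?_) hns4 (by
          exact Summable.mul_right _ (Summable.mul_left _ (summable_geometric_of_lt_one (by norm_num) (by norm_num))))
        rw [norm_smul]
        have h1 : ‖(((i+4) !:ℂ))⁻¹‖ = (((i+4) ! : ℝ))⁻¹ := by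
          rw [norm_inv]; norm_num
        have h2 : ‖a ^ (i+4)‖ ≤ ‖a‖^4 := by
          calc ‖a ^ (i+4)‖ ≤ ‖a‖^(i+4) := norm_pow_le' a (by omega)
            _ = ‖a‖^i * ‖a‖^4 := by rw [pow_add]
            _ ≤ 1 * ‖a‖^4 := by
                have := pow_le_one₀ (norm_nonneg a) ha (n := i)
                nlinarith [pow_nonneg (norm_nonneg a) 4]
            _ = ‖a‖^4 := one_mul _
        have h3 : (((i+4) ! : ℝ))⁻¹ ≤ (1/24) * (1/2)^i := by
          have h24 : (0:ℝ) < 24 * 2^i := by positivity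
          have hd := one_div_le_one_div_of_le h24 (fact_ge i)
          calc (((i+4) ! : ℝ))⁻¹ = 1 / ((i+4) ! : ℝ) := (one_div _).symm
            _ ≤ 1 / (24 * 2^i) := hd
            _ = (1/24) * (1/2)^i := by rw [one_div_pow]; ring
        calc ‖(((i+4) !:ℂ))⁻¹‖ * ‖a ^ (i+4)‖ ≤ (((i+4) ! : ℝ))⁻¹ * ‖a‖^4 := by
              rw [h1]; exact mul_le_mul_of_nonneg_left h2 (by positivity)
          _ ≤ (1/24) * (1/2)^i * ‖a‖^4 := by
              exact mul_le_mul_of_nonneg_right h3 (by positivity)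
    _ = (∑' i : ℕ, (1/24) * (1/2 : ℝ)^i) * ‖a‖^4 := by rw [tsum_mul_right]
    _ ≤ 3 * ‖a‖^4 := by
        rw [tsum_mul_left, tsum_geometric_of_lt_one (by norm_num) (by norm_num)]
        have : (0:ℝ) ≤ ‖a‖^4 := by positivity
        nlinarith


noncomputable def bchS (X : ℕ → A) (m : ℕ) : A := ∑ i ∈ Finset.Icc 1 m, X i

noncomputable def bchE2 (X : ℕ → A) (m : ℕ) : A :=
  (2:ℂ)⁻¹ • ∑ i ∈ Finset.Icc 1 m, ∑ j ∈ Finset.Icc (i+1) m, (X i * X j - X j * X i)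

noncomputable def bchE3 (X : ℕ → A) (m : ℕ) : A :=
  (12:ℂ)⁻¹ • (∑ i ∈ Finset.Icc 1 m, ∑ j ∈ (Finset.Icc 1 m).erase i,
      (X i * (X i * X j - X j * X i) - (X i * X j - X j * X i) * X i)) +
  (6:ℂ)⁻¹ • (∑ i ∈ Finset.Icc 1 m, ∑ j ∈ Finset.Icc (i+1) m, ∑ k ∈ Finset.Icc (j+1) m,
      ((X i * (X j * X k - X k * X j) - (X j * X k - X k * X j) * X i) +
        ((X i * X j - X j * X i) * X k - X k * (X i * X j - X j * X i))))


lemma sum_bracket_right (I : Finset ℕ) (f : ℕ → A) (x : A) :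
    ∑ i ∈ I, (f i * x - x * f i) = (∑ i ∈ I, f i) * x - x * ∑ i ∈ I, f i := by
  rw [Finset.sum_sub_distrib, Finset.sum_mul, Finset.mul_sum]

lemma sum_bracket_left (I : Finset ℕ) (f : ℕ → A) (a : A) :
    ∑ j ∈ I, (a * f j - f j * a) = a * (∑ j ∈ I, f j) - (∑ j ∈ I, f j) * a := by
  rw [Finset.sum_sub_distrib, Finset.mul_sum, Finset.sum_mul]

lemma pair_split (m : ℕ) (g : ℕ → ℕ → A) :
    ∑ i ∈ Finset.Icc 1 m, ∑ j ∈ Finset.Icc 1 m, g i j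
      = ∑ i ∈ Finset.Icc 1 m, g i i
        + ∑ i ∈ Finset.Icc 1 m, ∑ j ∈ Finset.Icc (i+1) m, (g i j + g j i) := by
  induction m with
  | zero => simp
  | succ m ih =>
      have hinner : ∀ i ∈ Finset.Icc 1 (m+1),
          ∑ j ∈ Finset.Icc 1 (m+1), g i j = ∑ j ∈ Finset.Icc 1 m, g i j + g i (m+1) :=
        fun i _ => Finset.sum_Icc_succ_top (by omega) _
      rw [Finset.sum_congr rfl hinner, Finset.sum_add_distrib,
        Finset.sum_Icc_succ_top (by omega : 1 ≤ m+1) (fun i => ∑ j ∈ Finset.Icc 1 m, g i j),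
        Finset.sum_Icc_succ_top (by omega : 1 ≤ m+1) (fun i => g i (m+1)),
        Finset.sum_Icc_succ_top (by omega : 1 ≤ m+1) (fun i => g i i),
        Finset.sum_Icc_succ_top (by omega : 1 ≤ m+1)
          (fun i => ∑ j ∈ Finset.Icc (i+1) (m+1), (g i j + g j i))]
      have h0 : ∑ j ∈ Finset.Icc (m+1+1) (m+1), (g (m+1) j + g j (m+1)) = 0 := by
        rw [Finset.Icc_eq_empty (by omega)]; simp
      have hin2 : ∀ i ∈ Finset.Icc 1 m,
          ∑ j ∈ Finset.Icc (i+1) (m+1), (g i j + g j i)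
            = ∑ j ∈ Finset.Icc (i+1) m, (g i j + g j i) + (g i (m+1) + g (m+1) i) := by
        intro i hi
        exact Finset.sum_Icc_succ_top (by simp only [Finset.mem_Icc] at hi; omega) _
      rw [h0, Finset.sum_congr rfl hin2, Finset.sum_add_distrib, ih, Finset.sum_add_distrib]
      abel


lemma bchE3_succ (X : ℕ → A) (m : ℕ) :
    bchE3 X (m+1) = bchE3 X m
      + (12:ℂ)⁻¹ • (X (m+1) * (X (m+1) * bchS X m - bchS X m * X (m+1))
          - (X (m+1) * bchS X m - bchS X m * X (m+1)) * X (m+1))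
      + (12:ℂ)⁻¹ • (bchS X m * (bchS X m * X (m+1) - X (m+1) * bchS X m)
          - (bchS X m * X (m+1) - X (m+1) * bchS X m) * bchS X m)
      + (2:ℂ)⁻¹ • (bchE2 X m * X (m+1) - X (m+1) * bchE2 X m) := by
  set x := X (m+1) with hx
  set I := Finset.Icc 1 m with hI
  -- Part A : the erase-double-sum
  set a : ℕ → ℕ → A := fun i j => X i * (X i * X j - X j * X i) - (X i * X j - X j * X i) * X i
    with ha
  have hins : Finset.Icc 1 (m+1) = insert (m+1) I := by
    ext k; simp only [hI, Finset.mem_insert, Finset.mem_Icc]; omega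
  have hnotmem : m+1 ∉ I := by simp only [hI, Finset.mem_Icc]; omega
  have hA : ∑ i ∈ Finset.Icc 1 (m+1), ∑ j ∈ (Finset.Icc 1 (m+1)).erase i, a i j
      = (∑ i ∈ I, ∑ j ∈ I.erase i, a i j) + (∑ i ∈ I, a i (m+1)) + ∑ j ∈ I, a (m+1) j := by
    rw [Finset.sum_Icc_succ_top (by omega : 1 ≤ m+1)]
    have h1 : (Finset.Icc 1 (m+1)).erase (m+1) = I := by
      rw [hins, Finset.erase_insert hnotmem]
    have h2 : ∀ i ∈ I, ∑ j ∈ (Finset.Icc 1 (m+1)).erase i, a i j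
        = ∑ j ∈ I.erase i, a i j + a i (m+1) := by
      intro i hi
      have hne : (m+1) ≠ i := by simp only [hI, Finset.mem_Icc] at hi; omega
      rw [hins, Finset.erase_insert_of_ne hne,
        Finset.sum_insert (fun hmem => hnotmem (Finset.erase_subset _ _ hmem)), add_comm]
    rw [h1, ← hI, Finset.sum_congr rfl h2, Finset.sum_add_distrib]
  -- Part B : the triple sum
  set c : ℕ → ℕ → ℕ → A := fun i j k =>
    (X i * (X j * X k - X k * X j) - (X j * X k - X k * X j) * X i) +
      ((X i * X j - X j * X i) * X k - X k * (X i * X j - X j * X i)) with hc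
  have hB : ∑ i ∈ Finset.Icc 1 (m+1), ∑ j ∈ Finset.Icc (i+1) (m+1),
        ∑ k ∈ Finset.Icc (j+1) (m+1), c i j k
      = (∑ i ∈ I, ∑ j ∈ Finset.Icc (i+1) m, ∑ k ∈ Finset.Icc (j+1) m, c i j k)
        + ∑ i ∈ I, ∑ j ∈ Finset.Icc (i+1) m, c i j (m+1) := by
    rw [Finset.sum_Icc_succ_top (by omega : 1 ≤ m+1)]
    have h1 : ∑ j ∈ Finset.Icc (m+1+1) (m+1), ∑ k ∈ Finset.Icc (j+1) (m+1), c (m+1) j k = 0 := by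
      rw [Finset.Icc_eq_empty (by omega)]; simp
    rw [h1, add_zero, ← hI]
    have h2 : ∀ i ∈ I, ∑ j ∈ Finset.Icc (i+1) (m+1), ∑ k ∈ Finset.Icc (j+1) (m+1), c i j k
        = ∑ j ∈ Finset.Icc (i+1) m,
            (∑ k ∈ Finset.Icc (j+1) m, c i j k + c i j (m+1)) := by
      intro i hi
      have him : i ≤ m := by simp only [hI, Finset.mem_Icc] at hi; omega
      rw [Finset.sum_Icc_succ_top (by omega : i+1 ≤ m+1)]
      have h3 : ∑ k ∈ Finset.Icc (m+1+1) (m+1), c i (m+1) k = 0 := by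
        rw [Finset.Icc_eq_empty (by omega)]; simp
      rw [h3, add_zero]
      refine Finset.sum_congr rfl fun j hj => ?_
      have hjm : j ≤ m := by simp only [Finset.mem_Icc] at hj; omega
      exact Finset.sum_Icc_succ_top (by omega : j+1 ≤ m+1) _
    rw [Finset.sum_congr rfl h2]
    simp only [Finset.sum_add_distrib]
  -- abbreviation for the big linearity facts
  have hK : ∑ j ∈ I, a (m+1) j
      = x * (x * (∑ i ∈ I, X i) - (∑ i ∈ I, X i) * x)
        - (x * (∑ i ∈ I, X i) - (∑ i ∈ I, X i) * x) * x := by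
    show ∑ j ∈ I, (x * (x * X j - X j * x) - (x * X j - X j * x) * x) = _
    rw [sum_bracket_left I (fun j => x * X j - X j * x) x, sum_bracket_left I X x]
  have hsplit : ∀ i j : ℕ, c i j (m+1)
      = (X i * (X j * x - x * X j) - (X j * x - x * X j) * X i)
        + ((X i * X j - X j * X i) * x - x * (X i * X j - X j * X i)) := fun i j => rfl
  have hB2 : ∑ i ∈ I, ∑ j ∈ Finset.Icc (i+1) m, c i j (m+1)
      = (∑ i ∈ I, ∑ j ∈ Finset.Icc (i+1) m,
          (X i * (X j * x - x * X j) - (X j * x - x * X j) * X i))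
        + ∑ i ∈ I, ∑ j ∈ Finset.Icc (i+1) m,
          ((X i * X j - X j * X i) * x - x * (X i * X j - X j * X i)) := by
    simp only [hsplit, Finset.sum_add_distrib]
  have hBx : ∑ i ∈ I, ∑ j ∈ Finset.Icc (i+1) m,
        ((X i * X j - X j * X i) * x - x * (X i * X j - X j * X i))
      = (∑ i ∈ I, ∑ j ∈ Finset.Icc (i+1) m, (X i * X j - X j * X i)) * x
        - x * ∑ i ∈ I, ∑ j ∈ Finset.Icc (i+1) m, (X i * X j - X j * X i) := by
    have h1 : ∀ i ∈ I, ∑ j ∈ Finset.Icc (i+1) m,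
        ((X i * X j - X j * X i) * x - x * (X i * X j - X j * X i))
        = (∑ j ∈ Finset.Icc (i+1) m, (X i * X j - X j * X i)) * x
          - x * ∑ j ∈ Finset.Icc (i+1) m, (X i * X j - X j * X i) :=
      fun i _ => sum_bracket_right _ _ x
    rw [Finset.sum_congr rfl h1,
      sum_bracket_right I (fun i => ∑ j ∈ Finset.Icc (i+1) m, (X i * X j - X j * X i)) x]
  -- pair splitting for the cross terms
  have hps := pair_split m (fun i j => X i * (X j * x - x * X j) - (X j * x - x * X j) * X i)
  have hLfull : ∑ i ∈ I, ∑ j ∈ I, (X i * (X j * x - x * X j) - (X j * x - x * X j) * X i)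
      = (∑ i ∈ I, X i) * ((∑ i ∈ I, X i) * x - x * (∑ i ∈ I, X i))
        - ((∑ i ∈ I, X i) * x - x * (∑ i ∈ I, X i)) * (∑ i ∈ I, X i) := by
    have h1 : ∀ i ∈ I, ∑ j ∈ I, (X i * (X j * x - x * X j) - (X j * x - x * X j) * X i)
        = X i * ((∑ i ∈ I, X i) * x - x * (∑ i ∈ I, X i))
          - ((∑ i ∈ I, X i) * x - x * (∑ i ∈ I, X i)) * X i := by
      intro i _
      rw [sum_bracket_left I (fun j => X j * x - x * X j) (X i), sum_bracket_right I X x]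
    rw [Finset.sum_congr rfl h1,
      sum_bracket_right I X ((∑ i ∈ I, X i) * x - x * (∑ i ∈ I, X i))]
  have hoff : ∀ i j : ℕ,
      ((X i * (X j * x - x * X j) - (X j * x - x * X j) * X i)
        + (X j * (X i * x - x * X i) - (X i * x - x * X i) * X j))
      = ((X i * (X j * x - x * X j) - (X j * x - x * X j) * X i)
        + (X i * (X j * x - x * X j) - (X j * x - x * X j) * X i))
        - ((X i * X j - X j * X i) * x - x * (X i * X j - X j * X i)) := by
    intro i j; noncomm_ring
  have hdiag : ∀ i : ℕ, (X i * (X i * x - x * X i) - (X i * x - x * X i) * X i) = a i (m+1) :=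
    fun i => rfl
  rw [hLfull] at hps
  have hoffsum : ∑ i ∈ I, ∑ j ∈ Finset.Icc (i+1) m,
        ((X i * (X j * x - x * X j) - (X j * x - x * X j) * X i)
          + (X j * (X i * x - x * X i) - (X i * x - x * X i) * X j))
      = ((∑ i ∈ I, ∑ j ∈ Finset.Icc (i+1) m,
            (X i * (X j * x - x * X j) - (X j * x - x * X j) * X i))
        + ∑ i ∈ I, ∑ j ∈ Finset.Icc (i+1) m,
            (X i * (X j * x - x * X j) - (X j * x - x * X j) * X i))
        - ∑ i ∈ I, ∑ j ∈ Finset.Icc (i+1) m,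
            ((X i * X j - X j * X i) * x - x * (X i * X j - X j * X i)) := by
    have := fun i (_ : i ∈ I) => Finset.sum_congr rfl
      (fun j (_ : j ∈ Finset.Icc (i+1) m) => hoff i j)
    rw [Finset.sum_congr rfl this]
    simp only [Finset.sum_add_distrib, Finset.sum_sub_distrib]
  rw [hoffsum] at hps
  simp only [hdiag] at hps
  -- Now assemble
  suffices h : (12:ℂ)⁻¹ • (∑ i ∈ Finset.Icc 1 (m+1), ∑ j ∈ (Finset.Icc 1 (m+1)).erase i, a i j)
      + (6:ℂ)⁻¹ • (∑ i ∈ Finset.Icc 1 (m+1), ∑ j ∈ Finset.Icc (i+1) (m+1),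
          ∑ k ∈ Finset.Icc (j+1) (m+1), c i j k)
    = ((12:ℂ)⁻¹ • (∑ i ∈ I, ∑ j ∈ I.erase i, a i j)
        + (6:ℂ)⁻¹ • (∑ i ∈ I, ∑ j ∈ Finset.Icc (i+1) m, ∑ k ∈ Finset.Icc (j+1) m, c i j k))
      + (12:ℂ)⁻¹ • (x * (x * (∑ i ∈ I, X i) - (∑ i ∈ I, X i) * x)
          - (x * (∑ i ∈ I, X i) - (∑ i ∈ I, X i) * x) * x)
      + (12:ℂ)⁻¹ • ((∑ i ∈ I, X i) * ((∑ i ∈ I, X i) * x - x * (∑ i ∈ I, X i))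
          - ((∑ i ∈ I, X i) * x - x * (∑ i ∈ I, X i)) * (∑ i ∈ I, X i))
      + (2:ℂ)⁻¹ • (((2:ℂ)⁻¹ • ∑ i ∈ I, ∑ j ∈ Finset.Icc (i+1) m, (X i * X j - X j * X i)) * x
          - x * ((2:ℂ)⁻¹ • ∑ i ∈ I, ∑ j ∈ Finset.Icc (i+1) m, (X i * X j - X j * X i))) by
    exact h
  rw [hA, hB, hB2, hBx, hK]
  set U := ∑ i ∈ I, a i (m+1) with hU
  set T := ∑ i ∈ I, ∑ j ∈ Finset.Icc (i+1) m,
      (X i * (X j * x - x * X j) - (X j * x - x * X j) * X i) with hTT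
  set D := ∑ i ∈ I, ∑ j ∈ Finset.Icc (i+1) m, (X i * X j - X j * X i) with hD
  set S := ∑ i ∈ I, X i with hSS
  rw [hBx] at hps
  have h2T : T + T = (S * (S * x - x * S) - (S * x - x * S) * S) - U + (D * x - x * D) := by
    rw [hps]; abel
  have hTval : T = (2:ℂ)⁻¹ • ((S * (S * x - x * S) - (S * x - x * S) * S) - U + (D * x - x * D)) := by
    have h1 : (2:ℂ) • T = (S * (S * x - x * S) - (S * x - x * S) * S) - U + (D * x - x * D) := by
      rw [two_smul]; exact h2T
    rw [← h1, smul_smul]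
    norm_num
  rw [hTval]
  simp only [smul_mul_assoc, mul_smul_comm, smul_sub, smul_add, smul_smul]
  module


lemma bchS_succ (X : ℕ → A) (m : ℕ) : bchS X (m+1) = bchS X m + X (m+1) := by
  unfold bchS
  exact Finset.sum_Icc_succ_top (by omega) X

lemma bchE2_succ (X : ℕ → A) (m : ℕ) :
    bchE2 X (m+1) = bchE2 X m + (2:ℂ)⁻¹ • (bchS X m * X (m+1) - X (m+1) * bchS X m) := by
  unfold bchE2 bchS
  rw [Finset.sum_Icc_succ_top (by omega : 1 ≤ m+1)]
  have h1 : ∑ j ∈ Finset.Icc (m+1+1) (m+1), (X (m+1) * X j - X j * X (m+1)) = 0 := by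
    rw [Finset.Icc_eq_empty (by omega)]; simp
  rw [h1, add_zero]
  have h2 : ∀ i ∈ Finset.Icc 1 m,
      ∑ j ∈ Finset.Icc (i+1) (m+1), (X i * X j - X j * X i)
      = ∑ j ∈ Finset.Icc (i+1) m, (X i * X j - X j * X i) + (X i * X (m+1) - X (m+1) * X i) := by
    intro i hi
    exact Finset.sum_Icc_succ_top (by simp only [Finset.mem_Icc] at hi; omega) _
  rw [Finset.sum_congr rfl h2, Finset.sum_add_distrib, sum_bracket_right, smul_add]

noncomputable def bchC2 (X : ℕ → A) (m : ℕ) : A :=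
  bchE2 X m + (2:ℂ)⁻¹ • (bchS X m * bchS X m)

noncomputable def bchC3 (X : ℕ → A) (m : ℕ) : A :=
  bchE3 X m + (2:ℂ)⁻¹ • (bchS X m * bchE2 X m + bchE2 X m * bchS X m)
    + (6:ℂ)⁻¹ • (bchS X m * (bchS X m * bchS X m))

lemma bchC2_succ (X : ℕ → A) (m : ℕ) :
    bchC2 X (m+1) = bchC2 X m + bchS X m * X (m+1) + (2:ℂ)⁻¹ • (X (m+1) * X (m+1)) := by
  unfold bchC2
  rw [bchE2_succ, bchS_succ]
  simp only [mul_add, add_mul, smul_mul_assoc, mul_smul_comm, smul_add, smul_sub, smul_smul,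
    mul_assoc, sub_mul, mul_sub]
  module

lemma bchC3_succ (X : ℕ → A) (m : ℕ) :
    bchC3 X (m+1) = bchC3 X m + bchC2 X m * X (m+1)
      + bchS X m * ((2:ℂ)⁻¹ • (X (m+1) * X (m+1)))
      + (6:ℂ)⁻¹ • (X (m+1) * (X (m+1) * X (m+1))) := by
  unfold bchC3 bchC2
  rw [bchE3_succ, bchE2_succ, bchS_succ]
  simp only [mul_add, add_mul, smul_mul_assoc, mul_smul_comm, smul_add, smul_sub, smul_smul,
    mul_assoc, sub_mul, mul_sub]
  module

noncomputable def bchP (X : ℕ → A) (m : ℕ) (t : ℂ) : A :=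
  1 + t • bchS X m + t^2 • bchC2 X m + t^3 • bchC3 X m

lemma ev_small (ε : ℝ) (hε : 0 < ε) : ∀ᶠ t : ℝ in nhds 0, |t| < ε := by
  have : Metric.ball (0:ℝ) ε ∈ nhds (0:ℝ) := Metric.ball_mem_nhds 0 hε
  filter_upwards [this] with t ht
  simpa [Real.dist_eq] using ht

lemma exp_poly_isBigO (y : ℝ → A) (c : ℝ) (hc : 0 ≤ c)
    (hy : ∀ᶠ t : ℝ in nhds 0, ‖y t‖ ≤ c * |t|) :
    (fun t : ℝ => exp (y t) - (1 + y t + (2:ℂ)⁻¹•(y t*y t) + (6:ℂ)⁻¹•(y t*(y t*y t))))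
      =O[nhds (0:ℝ)] fun t : ℝ => |t|^4 := by
  rw [isBigO_iff]
  refine ⟨3 * c^4, ?_⟩
  filter_upwards [hy, ev_small (c+1)⁻¹ (by positivity)] with t hyt hts
  have h1 : ‖y t‖ ≤ 1 := by
    have h0 : c * |t| ≤ c * (c+1)⁻¹ :=
      mul_le_mul_of_nonneg_left (le_of_lt hts) hc
    have h2 : c * (c+1)⁻¹ ≤ 1 := by
      rw [← div_eq_mul_inv, div_le_one (by positivity)]; linarith
    linarith
  have h2 := exp_cubic_approx (y t) h1
  have h3 : ‖y t‖^4 ≤ (c*|t|)^4 := pow_le_pow_left₀ (norm_nonneg _) hyt 4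
  have h4 : ‖|t|^4‖ = |t|^4 := by
    rw [Real.norm_eq_abs, abs_of_nonneg (by positivity)]
  rw [h4]
  calc ‖_‖ ≤ 3 * ‖y t‖^4 := h2
    _ ≤ 3 * (c*|t|)^4 := by linarith
    _ = 3*c^4 * |t|^4 := by ring

lemma t4_smul_isBigO (g : ℝ → A) (hg : ContinuousAt g 0) :
    (fun t : ℝ => ((t:ℂ)^4) • g t) =O[nhds (0:ℝ)] fun t : ℝ => |t|^4 := by
  rw [isBigO_iff]
  refine ⟨‖g 0‖ + 1, ?_⟩
  have hev : ∀ᶠ t : ℝ in nhds 0, ‖g t‖ ≤ ‖g 0‖ + 1 := by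
    have h1 : ∀ᶠ y : A in nhds (g 0), ‖y‖ ≤ ‖g 0‖ + 1 := by
      have : Metric.ball (g 0) 1 ∈ nhds (g 0) := Metric.ball_mem_nhds _ one_pos
      filter_upwards [this] with y hy
      have h3 : dist y (g 0) < 1 := by simpa [Metric.mem_ball] using hy
      calc ‖y‖ ≤ ‖g 0‖ + dist y (g 0) := by
            rw [dist_eq_norm]; exact norm_le_insert' y (g 0)
        _ ≤ ‖g 0‖ + 1 := by linarith
    exact hg.tendsto.eventually h1
  filter_upwards [hev] with t ht
  rw [norm_smul]
  have h1 : ‖(t:ℂ)^4‖ = |t|^4 := by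
    rw [norm_pow, Complex.norm_real, Real.norm_eq_abs]
  rw [h1]
  have h2 : ‖|t|^4‖ = |t|^4 := by
    rw [Real.norm_eq_abs, abs_of_nonneg (by positivity)]
  rw [h2]
  have h5 : (0:ℝ) ≤ |t|^4 := by positivity
  nlinarith [norm_nonneg (g t)]

lemma isBigO_one_of_contAt (g : ℝ → A) (hg : ContinuousAt g 0) :
    g =O[nhds (0:ℝ)] (fun _ : ℝ => (1:ℝ)) :=
  isBigO_const_of_tendsto hg.tendsto one_ne_zero

lemma key_product (X : ℕ → A) (m : ℕ) :
    (fun t : ℝ =>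
        ((List.range m).map (fun i => exp ((t : ℂ) • X (i + 1)))).prod - bchP X m (t:ℂ))
      =O[nhds (0:ℝ)] fun t : ℝ => |t| ^ 4 := by
  induction m with
  | zero =>
      have h0 : Finset.Icc 1 0 = (∅ : Finset ℕ) := Finset.Icc_eq_empty (by omega)
      have heq : (fun t : ℝ =>
          ((List.range 0).map (fun i => exp ((t : ℂ) • X (i + 1)))).prod - bchP X 0 (t:ℂ))
          = fun _ : ℝ => (0:A) := by
        funext t
        simp [bchP, bchC2, bchC3, bchS, bchE2, bchE3, h0]
      rw [heq]
      exact isBigO_zero _ _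
  | succ m ih =>
      set x := X (m+1) with hx
      -- the cubic Taylor polynomial of the new factor
      set Tm : ℝ → A := fun t => 1 + (t:ℂ)•x + ((t:ℂ)^2)•((2:ℂ)⁻¹•(x*x))
          + ((t:ℂ)^3)•((6:ℂ)⁻¹•(x*(x*x))) with hTm
      -- exp factor minus Tm is O(t^4)
      have hR : (fun t : ℝ => exp ((t:ℂ)•x) - Tm t) =O[nhds (0:ℝ)] fun t : ℝ => |t|^4 := by
        have hy : ∀ᶠ t : ℝ in nhds 0, ‖(t:ℂ)•x‖ ≤ ‖x‖ * |t| := by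
          filter_upwards with t
          rw [norm_smul, Complex.norm_real, Real.norm_eq_abs, mul_comm]
        have h1 := exp_poly_isBigO (fun t : ℝ => (t:ℂ)•x) ‖x‖ (norm_nonneg x) hy
        have heq : (fun t : ℝ => exp ((t:ℂ)•x)
            - (1 + (t:ℂ)•x + (2:ℂ)⁻¹•(((t:ℂ)•x)*((t:ℂ)•x))
              + (6:ℂ)⁻¹•(((t:ℂ)•x)*(((t:ℂ)•x)*((t:ℂ)•x)))))
            = fun t : ℝ => exp ((t:ℂ)•x) - Tm t := by
          funext t
          have : (1:A) + (t:ℂ)•x + (2:ℂ)⁻¹•(((t:ℂ)•x)*((t:ℂ)•x))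
              + (6:ℂ)⁻¹•(((t:ℂ)•x)*(((t:ℂ)•x)*((t:ℂ)•x))) = Tm t := by
            rw [hTm]
            simp only [smul_mul_assoc, mul_smul_comm, smul_smul]
            module
          rw [this]
        rwa [heq] at h1
      -- exp factor is O(1)
      have hexpO1 : (fun t : ℝ => exp ((t:ℂ)•x)) =O[nhds (0:ℝ)] (fun _ : ℝ => (1:ℝ)) := by
        apply isBigO_one_of_contAt
        apply Continuous.continuousAt
        exact (show Continuous (exp : A → A) by
          rw [← continuousOn_univ, ← Metric.eball_top_eq_univ (0 : A), ←
            expSeries_radius_eq_top ℂ A]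
          exact continuousOn_exp).comp ((Complex.continuous_ofReal).smul continuous_const)
      -- bchP is O(1)
      have hPO1 : (fun t : ℝ => bchP X m (t:ℂ)) =O[nhds (0:ℝ)] (fun _ : ℝ => (1:ℝ)) := by
        apply isBigO_one_of_contAt
        apply Continuous.continuousAt
        unfold bchP
        fun_prop
      -- junk polynomial
      set J : ℝ → A := fun t =>
        (bchS X m * ((6:ℂ)⁻¹•(x*(x*x))) + bchC2 X m * ((2:ℂ)⁻¹•(x*x)) + bchC3 X m * x)
        + (t:ℂ)•(bchC2 X m * ((6:ℂ)⁻¹•(x*(x*x))) + bchC3 X m * ((2:ℂ)⁻¹•(x*x)))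
        + ((t:ℂ)^2)•(bchC3 X m * ((6:ℂ)⁻¹•(x*(x*x)))) with hJ
      have hPT : ∀ t : ℝ, bchP X m (t:ℂ) * Tm t = bchP X (m+1) (t:ℂ) + ((t:ℂ)^4) • J t := by
        intro t
        rw [hTm, hJ]
        unfold bchP
        rw [bchS_succ, bchC2_succ, bchC3_succ]
        simp only [mul_add, add_mul, smul_mul_assoc, mul_smul_comm, smul_add, smul_sub, smul_smul,
          mul_assoc, mul_one, one_mul]
        module
      have hJO : (fun t : ℝ => ((t:ℂ)^4) • J t) =O[nhds (0:ℝ)] fun t : ℝ => |t|^4 := by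
        apply t4_smul_isBigO
        apply Continuous.continuousAt
        rw [hJ]
        fun_prop
      -- decomposition
      have hdec : (fun t : ℝ =>
          ((List.range (m+1)).map (fun i => exp ((t : ℂ) • X (i + 1)))).prod - bchP X (m+1) (t:ℂ))
          = fun t : ℝ =>
            (((List.range m).map (fun i => exp ((t : ℂ) • X (i + 1)))).prod - bchP X m (t:ℂ))
              * exp ((t:ℂ)•x)
            + bchP X m (t:ℂ) * (exp ((t:ℂ)•x) - Tm t)
            + ((t:ℂ)^4) • J t := by
        funext t
        have hprod : ((List.range (m+1)).map (fun i => exp ((t : ℂ) • X (i + 1)))).prod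
            = ((List.range m).map (fun i => exp ((t : ℂ) • X (i + 1)))).prod
              * exp ((t:ℂ)•x) := by
          rw [List.range_succ, List.map_append, List.prod_append]
          simp [hx]
        rw [hprod]
        have h5 := hPT t
        have : bchP X (m+1) (t:ℂ) = bchP X m (t:ℂ) * Tm t - ((t:ℂ)^4) • J t := by
          rw [h5]; abel
        rw [this]
        generalize ((t:ℂ)^4) • J t = q
        simp only [mul_sub, sub_mul]
        module
      rw [hdec]
      have h1 : (fun t : ℝ =>
          (((List.range m).map (fun i => exp ((t : ℂ) • X (i + 1)))).prod - bchP X m (t:ℂ))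
            * exp ((t:ℂ)•x)) =O[nhds (0:ℝ)] fun t : ℝ => |t|^4 := by
        simpa only [mul_one] using ih.mul hexpO1
      have h2 : (fun t : ℝ => bchP X m (t:ℂ) * (exp ((t:ℂ)•x) - Tm t))
          =O[nhds (0:ℝ)] fun t : ℝ => |t|^4 := by
        simpa only [one_mul] using hPO1.mul hR
      exact (h1.add h2).add hJO

lemma f2_id (t : ℂ) (e1 e2 e3 : A) :
    (2:ℂ)⁻¹ • ((t•e1 + t^2•e2 + t^3•e3) * (t•e1 + t^2•e2 + t^3•e3))
      - (t^2•((2:ℂ)⁻¹•(e1*e1)) + t^3•((2:ℂ)⁻¹•(e1*e2+e2*e1)))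
    = t^4 • ((2:ℂ)⁻¹•(e3*e1+e1*e3+(e2+t•e3)*(e2+t•e3))) := by
  simp only [mul_add, add_mul, smul_mul_assoc, mul_smul_comm, smul_add, smul_sub, smul_smul,
    mul_assoc]
  module

lemma f3_id (t : ℂ) (e1 e2 e3 : A) :
    (6:ℂ)⁻¹ • ((t•e1 + t^2•e2 + t^3•e3) * ((t•e1 + t^2•e2 + t^3•e3) * (t•e1 + t^2•e2 + t^3•e3)))
      - t^3•((6:ℂ)⁻¹•(e1*(e1*e1)))
    = t^4 • ((6:ℂ)⁻¹•((e2+t•e3)*((e1+t•(e2+t•e3))*(e1+t•(e2+t•e3)))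
        + e1*((e2+t•e3)*(e1+t•(e2+t•e3))) + e1*(e1*(e2+t•e3)))) := by
  simp only [mul_add, add_mul, smul_mul_assoc, mul_smul_comm, smul_add, smul_sub, smul_smul,
    mul_assoc]
  module

lemma expPoly (e1 e2 e3 : A) :
    (fun t : ℝ => exp ((t:ℂ)•e1 + ((t:ℂ)^2)•e2 + ((t:ℂ)^3)•e3)
      - (1 + (t:ℂ)•e1 + ((t:ℂ)^2)•(e2 + (2:ℂ)⁻¹•(e1*e1))
        + ((t:ℂ)^3)•(e3 + (2:ℂ)⁻¹•(e1*e2+e2*e1) + (6:ℂ)⁻¹•(e1*(e1*e1)))))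
      =O[nhds (0:ℝ)] fun t : ℝ => |t|^4 := by
  set y : ℝ → A := fun t => (t:ℂ)•e1 + ((t:ℂ)^2)•e2 + ((t:ℂ)^3)•e3 with hy
  set c : ℝ := ‖e1‖ + ‖e2‖ + ‖e3‖ with hc
  have hcnn : 0 ≤ c := by positivity
  have hybound : ∀ᶠ t : ℝ in nhds 0, ‖y t‖ ≤ c * |t| := by
    filter_upwards [ev_small 1 one_pos] with t ht
    have habs : ∀ k : ℕ, 1 ≤ k → ‖(t:ℂ)^k‖ ≤ |t| := by
      intro k hk
      rw [norm_pow, Complex.norm_real, Real.norm_eq_abs]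
      calc |t|^k ≤ |t|^1 := pow_le_pow_of_le_one (abs_nonneg t) (le_of_lt ht) hk
        _ = |t| := pow_one _
    have h1 : ‖(t:ℂ)•e1‖ ≤ |t| * ‖e1‖ := by
      rw [norm_smul, Complex.norm_real, Real.norm_eq_abs]
    have h2 : ‖((t:ℂ)^2)•e2‖ ≤ |t| * ‖e2‖ := by
      rw [norm_smul]
      exact mul_le_mul_of_nonneg_right (habs 2 (by omega)) (norm_nonneg _)
    have h3 : ‖((t:ℂ)^3)•e3‖ ≤ |t| * ‖e3‖ := by
      rw [norm_smul]
      exact mul_le_mul_of_nonneg_right (habs 3 (by omega)) (norm_nonneg _)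
    calc ‖y t‖ ≤ ‖(t:ℂ)•e1 + ((t:ℂ)^2)•e2‖ + ‖((t:ℂ)^3)•e3‖ := norm_add_le _ _
      _ ≤ (‖(t:ℂ)•e1‖ + ‖((t:ℂ)^2)•e2‖) + ‖((t:ℂ)^3)•e3‖ := by
          have := norm_add_le ((t:ℂ)•e1) (((t:ℂ)^2)•e2)
          linarith
      _ ≤ |t| * ‖e1‖ + |t| * ‖e2‖ + |t| * ‖e3‖ := by linarith
      _ = c * |t| := by rw [hc]; ring
  have hexp := exp_poly_isBigO y c hcnn hybound
  have hf2 : (fun t : ℝ => (2:ℂ)⁻¹•(y t * y t)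
      - (((t:ℂ)^2)•((2:ℂ)⁻¹•(e1*e1)) + ((t:ℂ)^3)•((2:ℂ)⁻¹•(e1*e2+e2*e1))))
      =O[nhds (0:ℝ)] fun t : ℝ => |t|^4 := by
    have heq : (fun t : ℝ => (2:ℂ)⁻¹•(y t * y t)
        - (((t:ℂ)^2)•((2:ℂ)⁻¹•(e1*e1)) + ((t:ℂ)^3)•((2:ℂ)⁻¹•(e1*e2+e2*e1))))
        = fun t : ℝ => ((t:ℂ)^4) •
            ((2:ℂ)⁻¹•(e3*e1+e1*e3+(e2+(t:ℂ)•e3)*(e2+(t:ℂ)•e3))) := by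
      funext t
      exact f2_id (t:ℂ) e1 e2 e3
    rw [heq]
    apply t4_smul_isBigO
    apply Continuous.continuousAt
    fun_prop
  have hf3 : (fun t : ℝ => (6:ℂ)⁻¹•(y t * (y t * y t)) - ((t:ℂ)^3)•((6:ℂ)⁻¹•(e1*(e1*e1))))
      =O[nhds (0:ℝ)] fun t : ℝ => |t|^4 := by
    have heq : (fun t : ℝ => (6:ℂ)⁻¹•(y t * (y t * y t)) - ((t:ℂ)^3)•((6:ℂ)⁻¹•(e1*(e1*e1))))
        = fun t : ℝ => ((t:ℂ)^4) • ((6:ℂ)⁻¹•((e2+(t:ℂ)•e3)*((e1+(t:ℂ)•(e2+(t:ℂ)•e3))*(e1+(t:ℂ)•(e2+(t:ℂ)•e3)))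
        + e1*((e2+(t:ℂ)•e3)*(e1+(t:ℂ)•(e2+(t:ℂ)•e3))) + e1*(e1*(e2+(t:ℂ)•e3)))) := by
      funext t
      exact f3_id (t:ℂ) e1 e2 e3
    rw [heq]
    apply t4_smul_isBigO
    apply Continuous.continuousAt
    fun_prop
  have hdec : (fun t : ℝ => exp ((t:ℂ)•e1 + ((t:ℂ)^2)•e2 + ((t:ℂ)^3)•e3)
      - (1 + (t:ℂ)•e1 + ((t:ℂ)^2)•(e2 + (2:ℂ)⁻¹•(e1*e1))
        + ((t:ℂ)^3)•(e3 + (2:ℂ)⁻¹•(e1*e2+e2*e1) + (6:ℂ)⁻¹•(e1*(e1*e1)))))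
      = fun t : ℝ =>
        (exp (y t) - (1 + y t + (2:ℂ)⁻¹•(y t*y t) + (6:ℂ)⁻¹•(y t*(y t*y t))))
        + ((2:ℂ)⁻¹•(y t * y t)
            - (((t:ℂ)^2)•((2:ℂ)⁻¹•(e1*e1)) + ((t:ℂ)^3)•((2:ℂ)⁻¹•(e1*e2+e2*e1))))
        + ((6:ℂ)⁻¹•(y t * (y t * y t)) - ((t:ℂ)^3)•((6:ℂ)⁻¹•(e1*(e1*e1)))) := by
    funext t
    rw [hy]
    simp only [smul_add]
    abel
  rw [hdec]
  exact (hexp.add hf2).add hf3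

lemma E2_range (X : ℕ → A) (N : ℕ) (hN : 1 ≤ N) :
    (2:ℂ)⁻¹ • (∑ i ∈ Finset.Icc 1 (N-1), ∑ j ∈ Finset.Icc (i+1) N, (X i * X j - X j * X i))
      = bchE2 X N := by
  unfold bchE2
  congr 1
  apply Finset.sum_subset (Finset.Icc_subset_Icc le_rfl (by omega))
  intro i hi hni
  have : i = N := by
    simp only [Finset.mem_Icc] at hi hni; omega
  subst this
  rw [Finset.Icc_eq_empty (by omega)]
  simp

lemma E3_range (X : ℕ → A) (N : ℕ) (hN : 1 ≤ N) :
    (12:ℂ)⁻¹ • (∑ i ∈ Finset.Icc 1 N, ∑ j ∈ (Finset.Icc 1 N).erase i,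
        (X i * (X i * X j - X j * X i) - (X i * X j - X j * X i) * X i)) +
      (6:ℂ)⁻¹ • (∑ i ∈ Finset.Icc 1 (N - 2), ∑ j ∈ Finset.Icc (i + 1) (N - 1),
        ∑ k ∈ Finset.Icc (j + 1) N,
          ((X i * (X j * X k - X k * X j) - (X j * X k - X k * X j) * X i) +
            ((X i * X j - X j * X i) * X k - X k * (X i * X j - X j * X i))))
      = bchE3 X N := by
  unfold bchE3
  congr 2
  -- extend j-range from Icc (i+1) (N-1) to Icc (i+1) N
  have hj : ∀ i, ∑ j ∈ Finset.Icc (i + 1) (N - 1), ∑ k ∈ Finset.Icc (j + 1) N,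
        ((X i * (X j * X k - X k * X j) - (X j * X k - X k * X j) * X i) +
          ((X i * X j - X j * X i) * X k - X k * (X i * X j - X j * X i)))
      = ∑ j ∈ Finset.Icc (i + 1) N, ∑ k ∈ Finset.Icc (j + 1) N,
        ((X i * (X j * X k - X k * X j) - (X j * X k - X k * X j) * X i) +
          ((X i * X j - X j * X i) * X k - X k * (X i * X j - X j * X i))) := by
    intro i
    apply Finset.sum_subset (Finset.Icc_subset_Icc le_rfl (by omega))
    intro j hj hnj
    have : j = N := by simp only [Finset.mem_Icc] at hj hnj; omega
    subst this
    rw [Finset.Icc_eq_empty (by omega)]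
    simp
  simp only [hj]
  -- extend i-range from Icc 1 (N-2) to Icc 1 N
  apply Finset.sum_subset (Finset.Icc_subset_Icc le_rfl (by omega))
  intro i hi hni
  apply Finset.sum_eq_zero
  intro j hjmem
  have hjN : N < j + 1 := by
    simp only [Finset.mem_Icc] at hi hni hjmem; omega
  rw [Finset.Icc_eq_empty (by omega)]
  simp

end BCHAux

/-- **N-term BCH expansion truncated after third order.**
In a complex unital Banach algebra `A`, for `X 1, …, X N ∈ A`, with
`E₁ = ∑ᵢ Xᵢ`, `E₂ = (1/2) ∑_{i<j} [Xᵢ,Xⱼ]`,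
`E₃ = (1/12) ∑ᵢ ∑_{j≠i} [Xᵢ,[Xᵢ,Xⱼ]] + (1/6) ∑_{i<j<k} ([Xᵢ,[Xⱼ,X_k]] + [[Xᵢ,Xⱼ],X_k])`,
as real `t → 0`, `‖exp(t X₁)⋯exp(t X_N) − exp(t E₁ + t² E₂ + t³ E₃)‖ = O(|t|⁴)`. -/
theorem nterm_BCH_order_three {A : Type*} [NormedRing A] [NormedAlgebra ℂ A]
    [CompleteSpace A] (N : ℕ) (hN : 1 ≤ N) (X : ℕ → A)
    (E₁ E₂ E₃ : A)
    (hE₁ : E₁ = ∑ i ∈ Finset.Icc 1 N, X i)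
    (hE₂ : E₂ = (2 : ℂ)⁻¹ •
      ∑ i ∈ Finset.Icc 1 (N - 1), ∑ j ∈ Finset.Icc (i + 1) N,
        (X i * X j - X j * X i))
    (hE₃ : E₃ = (12 : ℂ)⁻¹ •
        (∑ i ∈ Finset.Icc 1 N, ∑ j ∈ (Finset.Icc 1 N).erase i,
          (X i * (X i * X j - X j * X i) - (X i * X j - X j * X i) * X i)) +
      (6 : ℂ)⁻¹ •
        (∑ i ∈ Finset.Icc 1 (N - 2), ∑ j ∈ Finset.Icc (i + 1) (N - 1),
          ∑ k ∈ Finset.Icc (j + 1) N,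
            ((X i * (X j * X k - X k * X j) - (X j * X k - X k * X j) * X i) +
              ((X i * X j - X j * X i) * X k - X k * (X i * X j - X j * X i))))) :
    (fun t : ℝ =>
        ((List.range N).map (fun i => NormedSpace.exp ((t : ℂ) • X (i + 1)))).prod -
          NormedSpace.exp
            ((t : ℂ) • E₁ + ((t : ℂ) ^ 2) • E₂ + ((t : ℂ) ^ 3) • E₃))
      =O[nhds (0 : ℝ)] fun t : ℝ => |t| ^ 4 := by
  have hE1' : E₁ = bchS X N := hE₁
  have hE2' : E₂ = bchE2 X N := by rw [hE₂, E2_range X N hN]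
  have hE3' : E₃ = bchE3 X N := by rw [hE₃, E3_range X N hN]
  subst hE1' hE2' hE3'
  have h1 := key_product X N
  have h2 := expPoly (bchS X N) (bchE2 X N) (bchE3 X N)
  have hP : ∀ t : ℝ, bchP X N (t:ℂ)
      = 1 + (t:ℂ)•bchS X N + ((t:ℂ)^2)•(bchE2 X N + (2:ℂ)⁻¹•(bchS X N*bchS X N))
        + ((t:ℂ)^3)•(bchE3 X N + (2:ℂ)⁻¹•(bchS X N*bchE2 X N+bchE2 X N*bchS X N)
          + (6:ℂ)⁻¹•(bchS X N*(bchS X N*bchS X N))) := by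
    intro t; rfl
  have hdec : (fun t : ℝ =>
      ((List.range N).map (fun i => NormedSpace.exp ((t : ℂ) • X (i + 1)))).prod -
        NormedSpace.exp ((t : ℂ) • bchS X N + ((t : ℂ) ^ 2) • bchE2 X N
          + ((t : ℂ) ^ 3) • bchE3 X N))
      = fun t : ℝ =>
        (((List.range N).map (fun i => NormedSpace.exp ((t : ℂ) • X (i + 1)))).prod
          - bchP X N (t:ℂ))
        - (NormedSpace.exp ((t : ℂ) • bchS X N + ((t : ℂ) ^ 2) • bchE2 X N
            + ((t : ℂ) ^ 3) • bchE3 X N)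
          - (1 + (t:ℂ)•bchS X N + ((t:ℂ)^2)•(bchE2 X N + (2:ℂ)⁻¹•(bchS X N*bchS X N))
            + ((t:ℂ)^3)•(bchE3 X N + (2:ℂ)⁻¹•(bchS X N*bchE2 X N+bchE2 X N*bchS X N)
              + (6:ℂ)⁻¹•(bchS X N*(bchS X N*bchS X N))))) := by
    funext t
    rw [hP t]
    abel
  rw [hdec]
  exact h1.sub h2
end

section
/- Let A be a complex unital Banach algebra, let s ≥ 1, N ≥ 1, X_1, …, X_N ∈ A, and α_k^{[ℓ]} ∈ ℂ (k = 1,…,s; ℓ = 1,…,N). Define the splitting product P(t) := ∏_{k=1}^{s} ∏_{ℓ=1}^{N} exp(α_k^{[ℓ]} t X_ℓ), with factors multiplied left to right in increasing k, and within each k in increasing ℓ. Define C_{ℓ₁,ℓ₂} := (1/2)·Σ_{k=1}^{s} [ α_k^{[ℓ₂]}·(Σ_{j=1}^{k} α_j^{[ℓ₁]}) − α_k^{[ℓ₁]}·(Σ_{j=1}^{k−1} α_j^{[ℓ₂]}) ] for 1 ≤ ℓ₁ < ℓ₂ ≤ N. Then, as real t → 0, ‖P(t) − exp( t·Σ_{ℓ=1}^N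 (Σ_{k=1}^s α_k^{[ℓ]})·X_ℓ + t²·Σ_{ℓ₁=1}^{N−1} Σ_{ℓ₂=ℓ₁+1}^{N} C_{ℓ₁,ℓ₂}·[X_{ℓ₁},X_{ℓ₂}] )‖ = O(|t|³). -/
open scoped BigOperators

open Asymptotics Filter Finset

set_option linter.unusedSectionVars false
set_option linter.unusedVariables false
set_option maxHeartbeats 1000000

lemma Icc_one_sum {M : Type*} [AddCommMonoid M] (f : ℕ → M) (n : ℕ) :
    ∑ i ∈ Finset.Icc 1 n, f i = ∑ i ∈ Finset.range n, f (i + 1) := by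
  rw [← Finset.Ico_add_one_right_eq_Icc, Finset.sum_Ico_eq_sum_range]
  simp [Nat.add_comm]

lemma sum_sq_split {M : Type*} [AddCommMonoid M] (f : ℕ → ℕ → M) : ∀ n : ℕ,
    ∑ i ∈ Finset.range n, ∑ j ∈ Finset.range n, f i j
      = ∑ i ∈ Finset.range n, f i i
        + ∑ p ∈ Finset.range n, ∑ q ∈ Finset.range p, (f q p + f p q) := by
  intro n
  induction n with
  | zero => simp
  | succ n ih =>
      rw [Finset.sum_range_succ]
      have h1 : ∀ i, ∑ j ∈ Finset.range (n + 1), f i j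
          = ∑ j ∈ Finset.range n, f i j + f i n := fun i => Finset.sum_range_succ _ _
      rw [Finset.sum_congr rfl (fun i _ => h1 i), Finset.sum_add_distrib, ih]
      rw [Finset.sum_range_succ (fun i => f i i), Finset.sum_range_succ
        (fun p => ∑ q ∈ Finset.range p, (f q p + f p q)), Finset.sum_add_distrib]
      rw [h1 n]
      abel

lemma sum_flatten {M : Type*} [AddCommMonoid M] (g : ℕ → ℕ → M) (N : ℕ) : ∀ s : ℕ,
    ∑ p ∈ Finset.range (s * N), g (p / N) (p % N)
      = ∑ k ∈ Finset.range s, ∑ ℓ ∈ Finset.range N, g k ℓ := by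
  intro s
  induction s with
  | zero => simp
  | succ s ih =>
      rw [Nat.succ_mul, Finset.sum_range_add, ih, Finset.sum_range_succ]
      congr 1
      apply Finset.sum_congr rfl
      intro x hx
      have hxN : x < N := Finset.mem_range.mp hx
      have hN : 0 < N := Nat.pos_of_ne_zero (by omega)
      have hd : (s * N + x) / N = s := by
        rw [mul_comm, Nat.mul_add_div hN, Nat.div_eq_of_lt hxN, add_zero]
      have hm : (s * N + x) % N = x := by
        rw [mul_comm, Nat.mul_add_mod, Nat.mod_eq_of_lt hxN]
      rw [hd, hm]

lemma list_prod_flatten {M : Type*} [Monoid M] (g : ℕ → ℕ → M) (N : ℕ) : ∀ s : ℕ,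
    ((List.range (s * N)).map (fun p => g (p / N) (p % N))).prod
      = ((List.range s).map (fun k => ((List.range N).map (g k)).prod)).prod := by
  intro s
  induction s with
  | zero => simp
  | succ s ih =>
      rw [Nat.succ_mul, List.range_add, List.map_append, List.prod_append, ih,
        List.range_succ, List.map_append, List.prod_append]
      congr 1
      rw [List.map_map]
      simp only [List.map_cons, List.map_nil, List.prod_cons, List.prod_nil, mul_one]
      congr 1
      apply List.map_congr_left
      intro x hx
      have hxN : x < N := List.mem_range.mp hx
      have hN : 0 < N := Nat.pos_of_ne_zero (by omega)
      have hd : (s * N + x) / N = s := by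
        rw [mul_comm, Nat.mul_add_div hN, Nat.div_eq_of_lt hxN, add_zero]
      have hm : (s * N + x) % N = x := by
        rw [mul_comm, Nat.mul_add_mod, Nat.mod_eq_of_lt hxN]
      simp only [Function.comp_apply, hd, hm]

lemma half_split {A : Type*} [Ring A] [Algebra ℂ A] (n : ℕ) (v : ℕ → A) :
    ∑ p ∈ Finset.range n, ((2 : ℂ)⁻¹ • (v p * v p) + (∑ q ∈ Finset.range p, v q) * v p)
      = (2 : ℂ)⁻¹ • ((∑ p ∈ Finset.range n, v p) * ∑ p ∈ Finset.range n, v p)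
        + (2 : ℂ)⁻¹ • ∑ p ∈ Finset.range n, ∑ q ∈ Finset.range p, (v q * v p - v p * v q) := by
  have hsq : (∑ p ∈ Finset.range n, v p) * ∑ p ∈ Finset.range n, v p
      = ∑ p ∈ Finset.range n, v p * v p
        + ∑ p ∈ Finset.range n, ∑ q ∈ Finset.range p, (v q * v p + v p * v q) := by
    rw [Finset.sum_mul_sum]
    exact sum_sq_split (fun i j => v i * v j) n
  rw [hsq]
  have hc : ∀ x y : A, (2 : ℂ)⁻¹ • (x + y) + (2 : ℂ)⁻¹ • (x - y) = x := by
    intro x y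
    rw [← smul_add]
    have hxy : x + y + (x - y) = (2 : ℂ) • x := by
      rw [two_smul]; abel
    rw [hxy, smul_smul]
    norm_num
  have hinner : ∀ p : ℕ,
      (2 : ℂ)⁻¹ • (∑ q ∈ Finset.range p, (v q * v p + v p * v q))
        + (2 : ℂ)⁻¹ • (∑ q ∈ Finset.range p, (v q * v p - v p * v q))
      = ∑ q ∈ Finset.range p, v q * v p := by
    intro p
    rw [← smul_add, ← Finset.sum_add_distrib]
    have h2 : ∀ q ∈ Finset.range p, v q * v p + v p * v q + (v q * v p - v p * v q)
        = (2 : ℂ) • (v q * v p) := by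
      intro q _; rw [two_smul]; abel
    rw [Finset.sum_congr rfl h2, ← Finset.smul_sum, smul_smul]
    norm_num
  rw [smul_add, add_assoc, Finset.sum_add_distrib]
  congr 1
  · exact (Finset.smul_sum).symm
  · rw [Finset.smul_sum, Finset.smul_sum, ← Finset.sum_add_distrib]
    apply Finset.sum_congr rfl
    intro p _
    rw [Finset.sum_mul]
    exact (hinner p).symm

section Main
variable {A : Type*} [NormedRing A] [NormedAlgebra ℂ A] [CompleteSpace A]


/-- Second-order expansion with `O(|t|³)` remainder. -/
def IsExp2 (f : ℝ → A) (a₀ a₁ a₂ : A) : Prop :=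
  (fun t : ℝ => f t - a₀ - (t : ℂ) • a₁ - ((t : ℂ) ^ 2) • a₂) =O[nhds (0 : ℝ)]
    fun t : ℝ => |t| ^ 3

lemma eventually_abs_le_one : ∀ᶠ t : ℝ in nhds 0, |t| ≤ 1 := by
  filter_upwards [eventually_abs_sub_lt (0 : ℝ) one_pos] with t ht
  simpa using ht.le

lemma cube_isBigO_one : (fun t : ℝ => |t| ^ 3) =O[nhds (0 : ℝ)] (fun _ => (1 : ℝ)) := by
  apply IsBigO.of_bound 1
  filter_upwards [eventually_abs_le_one] with t ht
  have h1 : |t| ^ 3 ≤ 1 := pow_le_one₀ (abs_nonneg t) ht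
  simpa [abs_of_nonneg (pow_nonneg (abs_nonneg t) 3)] using h1

lemma pow_smul_isBigO (n : ℕ) (hn : 3 ≤ n) (v : A) :
    (fun t : ℝ => ((t : ℂ) ^ n) • v) =O[nhds (0 : ℝ)] fun t => |t| ^ 3 := by
  apply IsBigO.of_bound ‖v‖
  filter_upwards [eventually_abs_le_one] with t ht
  have h1 : ‖((t : ℂ) ^ n) • v‖ = |t| ^ n * ‖v‖ := by
    rw [norm_smul, norm_pow, Complex.norm_real, Real.norm_eq_abs]
  have h2 : |t| ^ n ≤ |t| ^ 3 := pow_le_pow_of_le_one (abs_nonneg t) ht hn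
  rw [h1, Real.norm_eq_abs, abs_pow, abs_abs, mul_comm]
  exact mul_le_mul_of_nonneg_left h2 (norm_nonneg v)

namespace IsExp2

lemma congr_coeffs {f : ℝ → A} {a₀ a₁ a₂ b₀ b₁ b₂ : A} (h : IsExp2 f a₀ a₁ a₂)
    (h₀ : a₀ = b₀) (h₁ : a₁ = b₁) (h₂ : a₂ = b₂) : IsExp2 f b₀ b₁ b₂ := by
  subst h₀; subst h₁; subst h₂; exact h

lemma congr_fun {f g : ℝ → A} {a₀ a₁ a₂ : A} (h : IsExp2 f a₀ a₁ a₂)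
    (hfg : ∀ t, f t = g t) : IsExp2 g a₀ a₁ a₂ := by
  unfold IsExp2 at *
  exact h.congr (fun t => by rw [hfg]) (fun _ => rfl)

lemma const (a : A) : IsExp2 (fun _ => a) a 0 0 := by
  unfold IsExp2
  have : (fun t : ℝ => a - a - (t : ℂ) • (0 : A) - ((t : ℂ) ^ 2) • (0 : A))
      = fun _ : ℝ => (0 : A) := by funext t; simp
  rw [this]
  exact isBigO_zero _ _

lemma poly_isBigO_one (a₀ a₁ a₂ : A) :
    (fun t : ℝ => a₀ + (t : ℂ) • a₁ + ((t : ℂ) ^ 2) • a₂) =O[nhds (0 : ℝ)]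
      (fun _ => (1 : ℝ)) := by
  apply Tendsto.isBigO_one
  have hc : Continuous fun t : ℝ => a₀ + (t : ℂ) • a₁ + ((t : ℂ) ^ 2) • a₂ := by
    apply Continuous.add
    apply Continuous.add continuous_const
    · exact (Complex.continuous_ofReal).smul continuous_const
    · exact ((Complex.continuous_ofReal).pow 2).smul continuous_const
  exact hc.tendsto 0

lemma isBigO_one {f : ℝ → A} {a₀ a₁ a₂ : A} (h : IsExp2 f a₀ a₁ a₂) :
    f =O[nhds (0 : ℝ)] (fun _ => (1 : ℝ)) := by
  have h3 := (h.trans cube_isBigO_one).add (poly_isBigO_one a₀ a₁ a₂)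
  have he : (fun t : ℝ => (f t - a₀ - (t : ℂ) • a₁ - ((t : ℂ) ^ 2) • a₂)
      + (a₀ + (t : ℂ) • a₁ + ((t : ℂ) ^ 2) • a₂)) = f := by funext t; abel
  rwa [he] at h3

lemma sub_isBigO {f g : ℝ → A} {a₀ a₁ a₂ : A} (hf : IsExp2 f a₀ a₁ a₂)
    (hg : IsExp2 g a₀ a₁ a₂) :
    (fun t : ℝ => f t - g t) =O[nhds (0 : ℝ)] fun t : ℝ => |t| ^ 3 := by
  have := hf.sub hg
  refine this.congr (fun t => ?_) (fun _ => rfl)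
  abel

lemma mul {f g : ℝ → A} {a₀ a₁ a₂ b₀ b₁ b₂ : A} (hf : IsExp2 f a₀ a₁ a₂)
    (hg : IsExp2 g b₀ b₁ b₂) :
    IsExp2 (fun t => f t * g t) (a₀ * b₀) (a₀ * b₁ + a₁ * b₀)
      (a₀ * b₂ + a₁ * b₁ + a₂ * b₀) := by
  have key : ∀ t : ℝ,
      (f t - a₀ - (t : ℂ) • a₁ - ((t : ℂ) ^ 2) • a₂) * g t
        + (a₀ + (t : ℂ) • a₁ + ((t : ℂ) ^ 2) • a₂)
            * (g t - b₀ - (t : ℂ) • b₁ - ((t : ℂ) ^ 2) • b₂)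
        + (((t : ℂ) ^ 3) • (a₁ * b₂ + a₂ * b₁) + ((t : ℂ) ^ 4) • (a₂ * b₂))
      = f t * g t - a₀ * b₀ - (t : ℂ) • (a₀ * b₁ + a₁ * b₀)
          - ((t : ℂ) ^ 2) • (a₀ * b₂ + a₁ * b₁ + a₂ * b₀) := by
    intro t
    simp only [sub_mul, mul_sub, add_mul, mul_add, smul_mul_assoc, mul_smul_comm,
      smul_add, smul_sub, smul_smul]
    module
  have h1 : (fun t : ℝ => (f t - a₀ - (t : ℂ) • a₁ - ((t : ℂ) ^ 2) • a₂) * g t)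
      =O[nhds (0 : ℝ)] fun t => |t| ^ 3 := by
    simpa using Asymptotics.IsBigO.mul hf hg.isBigO_one
  have h2 : (fun t : ℝ => (a₀ + (t : ℂ) • a₁ + ((t : ℂ) ^ 2) • a₂)
      * (g t - b₀ - (t : ℂ) • b₁ - ((t : ℂ) ^ 2) • b₂))
      =O[nhds (0 : ℝ)] fun t => |t| ^ 3 := by
    simpa using (poly_isBigO_one a₀ a₁ a₂).mul hg
  have h3 := (pow_smul_isBigO 3 le_rfl (a₁ * b₂ + a₂ * b₁)).add
    (pow_smul_isBigO 4 (by norm_num) (a₂ * b₂))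
  exact ((h1.add h2).add h3).congr key (fun _ => rfl)

end IsExp2


lemma fact_lower_bound : ∀ n : ℕ, 6 * 2 ^ n ≤ (n + 3).factorial := by
  intro n
  induction n with
  | zero => simp [Nat.factorial]
  | succ n ih =>
      have h1 : (n + 3 + 1).factorial = (n + 4) * (n + 3).factorial := rfl
      have h2 : 2 * (n + 3).factorial ≤ (n + 4) * (n + 3).factorial :=
        Nat.mul_le_mul_right _ (by omega)
      calc 6 * 2 ^ (n + 1) = 2 * (6 * 2 ^ n) := by ring
        _ ≤ 2 * (n + 3).factorial := Nat.mul_le_mul_left _ ih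
        _ ≤ (n + 4) * (n + 3).factorial := h2
        _ = (n + 1 + 3).factorial := by rw [show n+1+3 = n+3+1 by ring, h1]

lemma exp_taylor2 (u : A) (hu : ‖u‖ ≤ 1) :
    ‖NormedSpace.exp u - (1 + u + (2 : ℂ)⁻¹ • (u * u))‖ ≤ ‖u‖ ^ 3 := by
  have hs : Summable fun n : ℕ => ((n.factorial : ℂ))⁻¹ • u ^ n :=
    NormedSpace.expSeries_summable' u
  have hsum : (∑ i ∈ Finset.range 3, ((i.factorial : ℂ))⁻¹ • u ^ i)
      + ∑' n : ℕ, (((n + 3).factorial : ℂ))⁻¹ • u ^ (n + 3)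
      = ∑' n : ℕ, ((n.factorial : ℂ))⁻¹ • u ^ n := Summable.sum_add_tsum_nat_add 3 hs
  have hpart : ∑ i ∈ Finset.range 3, ((i.factorial : ℂ))⁻¹ • u ^ i
      = 1 + u + (2 : ℂ)⁻¹ • (u * u) := by
    rw [Finset.sum_range_succ, Finset.sum_range_succ, Finset.sum_range_succ,
      Finset.sum_range_zero]
    norm_num [Nat.factorial, pow_succ]
  have hdiff : NormedSpace.exp u - (1 + u + (2 : ℂ)⁻¹ • (u * u))
      = ∑' n : ℕ, (((n + 3).factorial : ℂ))⁻¹ • u ^ (n + 3) := by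
    have h0 : NormedSpace.exp u = ∑' n : ℕ, ((n.factorial : ℂ))⁻¹ • u ^ n := by
      rw [NormedSpace.exp_eq_tsum (𝕂 := ℂ)]
    rw [h0, ← hsum, hpart]
    abel
  rw [hdiff]
  -- bound each term
  have hterm : ∀ n : ℕ, ‖(((n + 3).factorial : ℂ))⁻¹ • u ^ (n + 3)‖
      ≤ ‖u‖ ^ 3 * ((6 : ℝ)⁻¹ * (2 : ℝ)⁻¹ ^ n) := by
    intro n
    have h1 : ‖(((n + 3).factorial : ℂ))⁻¹ • u ^ (n + 3)‖
        ≤ (((n + 3).factorial : ℝ))⁻¹ * ‖u‖ ^ (n + 3) := by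
      rw [norm_smul]
      have : ‖(((n + 3).factorial : ℂ))⁻¹‖ = (((n + 3).factorial : ℝ))⁻¹ := by
        rw [norm_inv]; norm_num
      rw [this]
      exact mul_le_mul_of_nonneg_left (norm_pow_le' u (by omega))
        (by positivity)
    have h2 : ‖u‖ ^ (n + 3) ≤ ‖u‖ ^ 3 := by
      rw [pow_add, mul_comm]
      have : ‖u‖ ^ n ≤ 1 := pow_le_one₀ (norm_nonneg u) hu
      calc ‖u‖ ^ 3 * ‖u‖ ^ n ≤ ‖u‖ ^ 3 * 1 :=
            mul_le_mul_of_nonneg_left this (by positivity)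
        _ = ‖u‖ ^ 3 := mul_one _
    have h3 : (((n + 3).factorial : ℝ))⁻¹ ≤ (6 : ℝ)⁻¹ * (2 : ℝ)⁻¹ ^ n := by
      have hb := fact_lower_bound n
      have hb' : ((6 * 2 ^ n : ℕ) : ℝ) ≤ ((n + 3).factorial : ℝ) := by exact_mod_cast hb
      have hpos : (0 : ℝ) < ((6 * 2 ^ n : ℕ) : ℝ) := by positivity
      have := inv_anti₀ hpos hb'
      calc (((n + 3).factorial : ℝ))⁻¹ ≤ (((6 * 2 ^ n : ℕ) : ℝ))⁻¹ := this
        _ = (6 : ℝ)⁻¹ * (2 : ℝ)⁻¹ ^ n := by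
            push_cast
            rw [mul_inv, inv_pow]
    calc ‖(((n + 3).factorial : ℂ))⁻¹ • u ^ (n + 3)‖
        ≤ (((n + 3).factorial : ℝ))⁻¹ * ‖u‖ ^ (n + 3) := h1
      _ ≤ ((6 : ℝ)⁻¹ * (2 : ℝ)⁻¹ ^ n) * ‖u‖ ^ 3 := by
          apply mul_le_mul h3 h2 (by positivity) (by positivity)
      _ = ‖u‖ ^ 3 * ((6 : ℝ)⁻¹ * (2 : ℝ)⁻¹ ^ n) := mul_comm _ _
  have hgs : Summable fun n : ℕ => ‖u‖ ^ 3 * ((6 : ℝ)⁻¹ * (2 : ℝ)⁻¹ ^ n) := by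
    apply Summable.mul_left
    apply Summable.mul_left
    exact summable_geometric_of_lt_one (by norm_num) (by norm_num)
  have hns : Summable fun n : ℕ => ‖(((n + 3).factorial : ℂ))⁻¹ • u ^ (n + 3)‖ :=
    Summable.of_nonneg_of_le (fun n => norm_nonneg _) hterm hgs
  calc ‖∑' n : ℕ, (((n + 3).factorial : ℂ))⁻¹ • u ^ (n + 3)‖
      ≤ ∑' n : ℕ, ‖(((n + 3).factorial : ℂ))⁻¹ • u ^ (n + 3)‖ :=
        norm_tsum_le_tsum_norm hns
    _ ≤ ∑' n : ℕ, ‖u‖ ^ 3 * ((6 : ℝ)⁻¹ * (2 : ℝ)⁻¹ ^ n) := Summable.tsum_le_tsum hterm hns hgs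
    _ = ‖u‖ ^ 3 * ((6 : ℝ)⁻¹ * ∑' n : ℕ, (2 : ℝ)⁻¹ ^ n) := by
        rw [tsum_mul_left, tsum_mul_left]
    _ ≤ ‖u‖ ^ 3 := by
        rw [tsum_geometric_of_lt_one (by norm_num) (by norm_num)]
        have : ((6 : ℝ)⁻¹ * (1 - 2⁻¹)⁻¹) = 1/3 := by norm_num
        rw [this]
        nlinarith [pow_nonneg (norm_nonneg u) 3]

lemma isExp2_exp_quadratic (B C : A) :
    IsExp2 (fun t : ℝ => NormedSpace.exp ((t : ℂ) • B + ((t : ℂ) ^ 2) • C)) 1 B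
      ((2 : ℂ)⁻¹ • (B * B) + C) := by
  set u : ℝ → A := fun t => (t : ℂ) • B + ((t : ℂ) ^ 2) • C with hu
  have key : ∀ t : ℝ,
      (NormedSpace.exp (u t) - (1 + u t + (2 : ℂ)⁻¹ • (u t * u t)))
        + (((t : ℂ) ^ 3) • ((2 : ℂ)⁻¹ • (B * C + C * B)) + ((t : ℂ) ^ 4) • ((2 : ℂ)⁻¹ • (C * C)))
      = NormedSpace.exp (u t) - 1 - (t : ℂ) • B
          - ((t : ℂ) ^ 2) • ((2 : ℂ)⁻¹ • (B * B) + C) := by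
    intro t
    have : u t * u t = ((t : ℂ) ^ 2) • (B * B) + ((t : ℂ) ^ 3) • (B * C + C * B)
        + ((t : ℂ) ^ 4) • (C * C) := by
      simp only [hu, add_mul, mul_add, smul_mul_assoc, mul_smul_comm, smul_smul, smul_add]
      module
    rw [this]
    simp only [hu, smul_add, smul_smul]
    module
  have hO1 : (fun t : ℝ => NormedSpace.exp (u t) - (1 + u t + (2 : ℂ)⁻¹ • (u t * u t)))
      =O[nhds (0 : ℝ)] fun t => |t| ^ 3 := by
    apply IsBigO.of_bound ((‖B‖ + ‖C‖ + 1) ^ 3)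
    have hM : (0 : ℝ) < ‖B‖ + ‖C‖ + 1 := by positivity
    have hev : ∀ᶠ t : ℝ in nhds 0, |t| ≤ (‖B‖ + ‖C‖ + 1)⁻¹ := by
      filter_upwards [eventually_abs_sub_lt (0 : ℝ) (inv_pos.mpr hM)] with t ht
      simpa using ht.le
    filter_upwards [eventually_abs_le_one, hev] with t ht1 htM
    have hnu : ‖u t‖ ≤ |t| * (‖B‖ + ‖C‖ + 1) := by
      calc ‖u t‖ ≤ ‖(t : ℂ) • B‖ + ‖((t : ℂ) ^ 2) • C‖ := norm_add_le _ _
        _ = |t| * ‖B‖ + |t| ^ 2 * ‖C‖ := by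
            rw [norm_smul, norm_smul, norm_pow, Complex.norm_real, Real.norm_eq_abs]
        _ ≤ |t| * ‖B‖ + |t| * ‖C‖ := by
            have : |t| ^ 2 ≤ |t| := by
              nlinarith [abs_nonneg t]
            nlinarith [norm_nonneg C]
        _ ≤ |t| * (‖B‖ + ‖C‖ + 1) := by nlinarith [abs_nonneg t]
    have hu1 : ‖u t‖ ≤ 1 := by
      calc ‖u t‖ ≤ |t| * (‖B‖ + ‖C‖ + 1) := hnu
        _ ≤ (‖B‖ + ‖C‖ + 1)⁻¹ * (‖B‖ + ‖C‖ + 1) := by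
            exact mul_le_mul_of_nonneg_right htM (by positivity)
        _ = 1 := inv_mul_cancel₀ (ne_of_gt hM)
    calc ‖NormedSpace.exp (u t) - (1 + u t + (2 : ℂ)⁻¹ • (u t * u t))‖
        ≤ ‖u t‖ ^ 3 := exp_taylor2 (u t) hu1
      _ ≤ (|t| * (‖B‖ + ‖C‖ + 1)) ^ 3 := by
          apply pow_le_pow_left₀ (norm_nonneg _) hnu
      _ = (‖B‖ + ‖C‖ + 1) ^ 3 * ‖|t| ^ 3‖ := by
          rw [mul_pow, Real.norm_eq_abs, abs_pow, abs_abs]; ring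
  have hO2 := (pow_smul_isBigO 3 le_rfl ((2 : ℂ)⁻¹ • (B * C + C * B))).add
    (pow_smul_isBigO 4 (by norm_num) ((2 : ℂ)⁻¹ • (C * C)))
  exact (hO1.add hO2).congr key (fun _ => rfl)

lemma isExp2_exp_linear (c : ℂ) (Y : A) :
    IsExp2 (fun t : ℝ => NormedSpace.exp ((c * (t : ℂ)) • Y)) 1 (c • Y)
      ((2 : ℂ)⁻¹ • ((c • Y) * (c • Y))) := by
  have h := isExp2_exp_quadratic (c • Y) (0 : A)
  have h2 := IsExp2.congr_fun h (g := fun t : ℝ => NormedSpace.exp ((c * (t : ℂ)) • Y))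
    (by
      intro t
      congr 1
      rw [smul_zero, add_zero, smul_smul, mul_comm])
  exact IsExp2.congr_coeffs h2 rfl rfl (by rw [add_zero])

lemma isExp2_prod_range (f : ℕ → ℝ → A) (b c : ℕ → A)
    (h : ∀ i, IsExp2 (f i) 1 (b i) (c i)) (n : ℕ) :
    IsExp2 (fun t => ((List.range n).map (fun i => f i t)).prod) 1
      (∑ i ∈ Finset.range n, b i)
      (∑ i ∈ Finset.range n, (c i + (∑ j ∈ Finset.range i, b j) * b i)) := by
  induction n with
  | zero =>
      apply IsExp2.congr_coeffs (IsExp2.const (1 : A)) rfl (by simp) (by simp)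
  | succ n ih =>
      have hm := IsExp2.mul ih (h n)
      have hm2 := IsExp2.congr_fun hm
        (g := fun t => ((List.range (n + 1)).map (fun i => f i t)).prod)
        (by
          intro t
          simp [List.range_succ])
      apply IsExp2.congr_coeffs hm2 (one_mul 1)
      · rw [Finset.sum_range_succ]
        rw [one_mul, mul_one, add_comm]
      · rw [Finset.sum_range_succ]
        rw [one_mul, mul_one]
        abel

lemma antisym_square (n : ℕ) (β γ : ℕ → ℂ) (Y : ℕ → A) :
    ∑ ℓ ∈ Finset.range n, ∑ m ∈ Finset.range n, (β m * γ ℓ) • (Y m * Y ℓ - Y ℓ * Y m)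
      = ∑ ℓ ∈ Finset.range n, ∑ m ∈ Finset.range ℓ,
          (β m * γ ℓ - β ℓ * γ m) • (Y m * Y ℓ - Y ℓ * Y m) := by
  rw [Finset.sum_comm]
  rw [sum_sq_split (fun i j => (β i * γ j) • (Y i * Y j - Y j * Y i)) n]
  have hdiag : ∑ i ∈ Finset.range n, (β i * γ i) • (Y i * Y i - Y i * Y i) = 0 :=
    Finset.sum_eq_zero (fun i _ => by simp)
  rw [hdiag, zero_add]
  apply Finset.sum_congr rfl
  intro p _
  apply Finset.sum_congr rfl
  intro q _
  have h2 : Y p * Y q - Y q * Y p = -(Y q * Y p - Y p * Y q) := by abel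
  rw [h2, smul_neg, ← sub_eq_add_neg, sub_smul]

lemma T_step (s N : ℕ) (X : ℕ → A) (α : ℕ → ℕ → ℂ) :
    ∑ p ∈ Finset.range (s * N), ∑ q ∈ Finset.range p,
        ((α (q / N + 1) (q % N + 1) • X (q % N + 1)) * (α (p / N + 1) (p % N + 1) • X (p % N + 1))
          - (α (p / N + 1) (p % N + 1) • X (p % N + 1)) * (α (q / N + 1) (q % N + 1) • X (q % N + 1)))
      = ∑ ℓ ∈ Finset.range N, ∑ m ∈ Finset.range ℓ,
          (∑ k ∈ Finset.range s, (α (k + 1) (ℓ + 1) * ∑ j ∈ Finset.range (k + 1), α (j + 1) (m + 1)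
              - α (k + 1) (m + 1) * ∑ j ∈ Finset.range k, α (j + 1) (ℓ + 1)))
            • (X (m + 1) * X (ℓ + 1) - X (ℓ + 1) * X (m + 1)) := by
  calc
    ∑ p ∈ Finset.range (s * N), ∑ q ∈ Finset.range p,
        ((α (q / N + 1) (q % N + 1) • X (q % N + 1)) * (α (p / N + 1) (p % N + 1) • X (p % N + 1))
          - (α (p / N + 1) (p % N + 1) • X (p % N + 1)) * (α (q / N + 1) (q % N + 1) • X (q % N + 1)))
      = ∑ p ∈ Finset.range (s * N), ∑ q ∈ Finset.range p,
          (α (q / N + 1) (q % N + 1) * α (p / N + 1) (p % N + 1))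
            • (X (q % N + 1) * X (p % N + 1) - X (p % N + 1) * X (q % N + 1)) := by
        apply Finset.sum_congr rfl; intro p _
        apply Finset.sum_congr rfl; intro q _
        rw [smul_mul_smul_comm, smul_mul_smul_comm,
          mul_comm (α (p / N + 1) (p % N + 1)) (α (q / N + 1) (q % N + 1)), ← smul_sub]
    _ = ∑ k ∈ Finset.range s, ∑ ℓ ∈ Finset.range N, ∑ q ∈ Finset.range (k * N + ℓ),
          (α (q / N + 1) (q % N + 1) * α (k + 1) (ℓ + 1))
            • (X (q % N + 1) * X (ℓ + 1) - X (ℓ + 1) * X (q % N + 1)) := by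
        rw [← sum_flatten (fun k ℓ => ∑ q ∈ Finset.range (k * N + ℓ),
          (α (q / N + 1) (q % N + 1) * α (k + 1) (ℓ + 1))
            • (X (q % N + 1) * X (ℓ + 1) - X (ℓ + 1) * X (q % N + 1))) N s]
        apply Finset.sum_congr rfl
        intro p _
        simp only [Nat.div_add_mod']
    _ = ∑ k ∈ Finset.range s, ∑ ℓ ∈ Finset.range N,
          ((∑ k' ∈ Finset.range k, ∑ m ∈ Finset.range N,
              (α (k' + 1) (m + 1) * α (k + 1) (ℓ + 1))
                • (X (m + 1) * X (ℓ + 1) - X (ℓ + 1) * X (m + 1)))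
            + ∑ i ∈ Finset.range ℓ, (α (k + 1) (i + 1) * α (k + 1) (ℓ + 1))
                • (X (i + 1) * X (ℓ + 1) - X (ℓ + 1) * X (i + 1))) := by
        apply Finset.sum_congr rfl; intro k _
        apply Finset.sum_congr rfl; intro ℓ hℓ
        have hℓN : ℓ < N := Finset.mem_range.mp hℓ
        have hN0 : 0 < N := Nat.pos_of_ne_zero (by omega)
        rw [Finset.sum_range_add]
        congr 1
        · exact sum_flatten (fun k' m => (α (k' + 1) (m + 1) * α (k + 1) (ℓ + 1))
            • (X (m + 1) * X (ℓ + 1) - X (ℓ + 1) * X (m + 1))) N k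
        · apply Finset.sum_congr rfl
          intro i hi
          have hiN : i < N := lt_trans (Finset.mem_range.mp hi) hℓN
          have hd : (k * N + i) / N = k := by
            rw [mul_comm k N, Nat.mul_add_div hN0, Nat.div_eq_of_lt hiN, add_zero]
          have hm : (k * N + i) % N = i := by
            rw [mul_comm k N, Nat.mul_add_mod, Nat.mod_eq_of_lt hiN]
          rw [hd, hm]
    _ = ∑ k ∈ Finset.range s, ∑ ℓ ∈ Finset.range N, ∑ m ∈ Finset.range ℓ,
          ((∑ k' ∈ Finset.range k, (α (k' + 1) (m + 1) * α (k + 1) (ℓ + 1)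
              - α (k' + 1) (ℓ + 1) * α (k + 1) (m + 1)))
            + α (k + 1) (m + 1) * α (k + 1) (ℓ + 1))
            • (X (m + 1) * X (ℓ + 1) - X (ℓ + 1) * X (m + 1)) := by
        apply Finset.sum_congr rfl; intro k _
        rw [Finset.sum_add_distrib]
        have hcross : ∑ ℓ ∈ Finset.range N, ∑ k' ∈ Finset.range k, ∑ m ∈ Finset.range N,
              (α (k' + 1) (m + 1) * α (k + 1) (ℓ + 1))
                • (X (m + 1) * X (ℓ + 1) - X (ℓ + 1) * X (m + 1))
            = ∑ ℓ ∈ Finset.range N, ∑ m ∈ Finset.range ℓ, ∑ k' ∈ Finset.range k,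
              (α (k' + 1) (m + 1) * α (k + 1) (ℓ + 1)
                - α (k' + 1) (ℓ + 1) * α (k + 1) (m + 1))
                • (X (m + 1) * X (ℓ + 1) - X (ℓ + 1) * X (m + 1)) := by
          rw [Finset.sum_comm]
          have : ∀ k' ∈ Finset.range k,
              ∑ ℓ ∈ Finset.range N, ∑ m ∈ Finset.range N,
                (α (k' + 1) (m + 1) * α (k + 1) (ℓ + 1))
                  • (X (m + 1) * X (ℓ + 1) - X (ℓ + 1) * X (m + 1))
              = ∑ ℓ ∈ Finset.range N, ∑ m ∈ Finset.range ℓ,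
                (α (k' + 1) (m + 1) * α (k + 1) (ℓ + 1)
                  - α (k' + 1) (ℓ + 1) * α (k + 1) (m + 1))
                  • (X (m + 1) * X (ℓ + 1) - X (ℓ + 1) * X (m + 1)) := by
            intro k' _
            exact antisym_square N (fun m => α (k' + 1) (m + 1)) (fun ℓ => α (k + 1) (ℓ + 1))
              (fun m => X (m + 1))
          rw [Finset.sum_congr rfl this, Finset.sum_comm]
          apply Finset.sum_congr rfl; intro ℓ _
          rw [Finset.sum_comm]
        rw [hcross, ← Finset.sum_add_distrib]
        apply Finset.sum_congr rfl; intro ℓ _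
        rw [← Finset.sum_add_distrib]
        apply Finset.sum_congr rfl; intro m _
        rw [add_smul, Finset.sum_smul]
    _ = ∑ ℓ ∈ Finset.range N, ∑ m ∈ Finset.range ℓ,
          (∑ k ∈ Finset.range s, (α (k + 1) (ℓ + 1) * ∑ j ∈ Finset.range (k + 1), α (j + 1) (m + 1)
              - α (k + 1) (m + 1) * ∑ j ∈ Finset.range k, α (j + 1) (ℓ + 1)))
            • (X (m + 1) * X (ℓ + 1) - X (ℓ + 1) * X (m + 1)) := by
        rw [Finset.sum_comm]
        apply Finset.sum_congr rfl; intro ℓ _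
        rw [Finset.sum_comm]
        apply Finset.sum_congr rfl; intro m _
        rw [Finset.sum_smul]
        apply Finset.sum_congr rfl; intro k _
        congr 1
        rw [Finset.sum_sub_distrib, ← Finset.sum_mul, ← Finset.sum_mul, Finset.sum_range_succ]
        ring

lemma final_match (s N : ℕ) (X : ℕ → A) (α : ℕ → ℕ → ℂ) :
    (2 : ℂ)⁻¹ • (∑ ℓ ∈ Finset.range N, ∑ m ∈ Finset.range ℓ,
        (∑ k ∈ Finset.range s, (α (k + 1) (ℓ + 1) * ∑ j ∈ Finset.range (k + 1), α (j + 1) (m + 1)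
            - α (k + 1) (m + 1) * ∑ j ∈ Finset.range k, α (j + 1) (ℓ + 1)))
          • (X (m + 1) * X (ℓ + 1) - X (ℓ + 1) * X (m + 1)))
      = ∑ ℓ₁ ∈ Finset.Icc 1 (N - 1), ∑ ℓ₂ ∈ Finset.Icc (ℓ₁ + 1) N,
          ((1 / 2 : ℂ) * ∑ k ∈ Finset.Icc 1 s,
              (α k ℓ₂ * (∑ j ∈ Finset.Icc 1 k, α j ℓ₁)
                - α k ℓ₁ * (∑ j ∈ Finset.Icc 1 (k - 1), α j ℓ₂)))
            • (X ℓ₁ * X ℓ₂ - X ℓ₂ * X ℓ₁) := by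
  calc
    (2 : ℂ)⁻¹ • (∑ ℓ ∈ Finset.range N, ∑ m ∈ Finset.range ℓ,
        (∑ k ∈ Finset.range s, (α (k + 1) (ℓ + 1) * ∑ j ∈ Finset.range (k + 1), α (j + 1) (m + 1)
            - α (k + 1) (m + 1) * ∑ j ∈ Finset.range k, α (j + 1) (ℓ + 1)))
          • (X (m + 1) * X (ℓ + 1) - X (ℓ + 1) * X (m + 1)))
      = ∑ ℓ ∈ Finset.range N, ∑ m ∈ Finset.range ℓ,
          ((2 : ℂ)⁻¹ * ∑ k ∈ Finset.range s,
              (α (k + 1) (ℓ + 1) * ∑ j ∈ Finset.range (k + 1), α (j + 1) (m + 1)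
                - α (k + 1) (m + 1) * ∑ j ∈ Finset.range k, α (j + 1) (ℓ + 1)))
            • (X (m + 1) * X (ℓ + 1) - X (ℓ + 1) * X (m + 1)) := by
        rw [Finset.smul_sum]
        apply Finset.sum_congr rfl; intro ℓ _
        rw [Finset.smul_sum]
        apply Finset.sum_congr rfl; intro m _
        rw [smul_smul]
    _ = ∑ ℓ₁ ∈ Finset.Icc 1 (N - 1), ∑ ℓ₂ ∈ Finset.Icc (ℓ₁ + 1) N,
          ((1 / 2 : ℂ) * ∑ k ∈ Finset.Icc 1 s,
              (α k ℓ₂ * (∑ j ∈ Finset.Icc 1 k, α j ℓ₁)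
                - α k ℓ₁ * (∑ j ∈ Finset.Icc 1 (k - 1), α j ℓ₂)))
            • (X ℓ₁ * X ℓ₂ - X ℓ₂ * X ℓ₁) := by
        rw [Finset.sum_sigma', Finset.sum_sigma']
        apply Finset.sum_nbij' (i := fun x : Σ _ : ℕ, ℕ => (⟨x.2 + 1, x.1 + 1⟩ : Σ _ : ℕ, ℕ))
          (j := fun y : Σ _ : ℕ, ℕ => (⟨y.2 - 1, y.1 - 1⟩ : Σ _ : ℕ, ℕ))
        · intro x hx
          obtain ⟨x1, x2⟩ := x
          simp only [Finset.mem_sigma, Finset.mem_range, Finset.mem_Icc] at hx ⊢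
          omega
        · intro y hy
          obtain ⟨y1, y2⟩ := y
          simp only [Finset.mem_sigma, Finset.mem_range, Finset.mem_Icc] at hy ⊢
          omega
        · intro x hx
          obtain ⟨x1, x2⟩ := x
          simp only [Nat.add_sub_cancel]
        · intro y hy
          obtain ⟨y1, y2⟩ := y
          simp only [Finset.mem_sigma, Finset.mem_Icc] at hy
          dsimp only
          have e1 : y2 - 1 + 1 = y2 := by omega
          have e2 : y1 - 1 + 1 = y1 := by omega
          rw [e1, e2]
        · intro x hx
          obtain ⟨x1, x2⟩ := x
          simp only [Finset.mem_sigma, Finset.mem_range] at hx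
          dsimp only
          have hsc : (2 : ℂ)⁻¹ = (1 / 2 : ℂ) := by norm_num
          have hK : ∑ k ∈ Finset.Icc 1 s,
              (α k (x1 + 1) * (∑ j ∈ Finset.Icc 1 k, α j (x2 + 1))
                - α k (x2 + 1) * (∑ j ∈ Finset.Icc 1 (k - 1), α j (x1 + 1)))
              = ∑ k ∈ Finset.range s,
                (α (k + 1) (x1 + 1) * ∑ j ∈ Finset.range (k + 1), α (j + 1) (x2 + 1)
                  - α (k + 1) (x2 + 1) * ∑ j ∈ Finset.range k, α (j + 1) (x1 + 1)) := by
            rw [Icc_one_sum]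
            apply Finset.sum_congr rfl; intro k _
            rw [Nat.add_sub_cancel, Icc_one_sum, Icc_one_sum]
          rw [hsc, hK]
  
lemma bB_eq (s N : ℕ) (X : ℕ → A) (α : ℕ → ℕ → ℂ) :
    (∑ p ∈ Finset.range (s * N), α (p / N + 1) (p % N + 1) • X (p % N + 1))
      = ∑ ℓ ∈ Finset.Icc 1 N, (∑ k ∈ Finset.Icc 1 s, α k ℓ) • X ℓ := by
  calc ∑ p ∈ Finset.range (s * N), α (p / N + 1) (p % N + 1) • X (p % N + 1)
      = ∑ k ∈ Finset.range s, ∑ ℓ ∈ Finset.range N, α (k + 1) (ℓ + 1) • X (ℓ + 1) :=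
        sum_flatten (fun k ℓ => α (k + 1) (ℓ + 1) • X (ℓ + 1)) N s
    _ = ∑ ℓ ∈ Finset.range N, ∑ k ∈ Finset.range s, α (k + 1) (ℓ + 1) • X (ℓ + 1) :=
        Finset.sum_comm
    _ = ∑ ℓ ∈ Finset.range N, (∑ k ∈ Finset.range s, α (k + 1) (ℓ + 1)) • X (ℓ + 1) := by
        apply Finset.sum_congr rfl; intro ℓ _
        rw [Finset.sum_smul]
    _ = ∑ ℓ ∈ Finset.Icc 1 N, (∑ k ∈ Finset.Icc 1 s, α k ℓ) • X ℓ := by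
        rw [Icc_one_sum (fun ℓ => (∑ k ∈ Finset.Icc 1 s, α k ℓ) • X ℓ) N]
        apply Finset.sum_congr rfl; intro ℓ _
        rw [Icc_one_sum (fun k => α k (ℓ + 1)) s]

lemma coeff_main (s N : ℕ) (X : ℕ → A) (α : ℕ → ℕ → ℂ) :
    ∑ p ∈ Finset.range (s * N),
        ((2 : ℂ)⁻¹ • ((α (p / N + 1) (p % N + 1) • X (p % N + 1))
              * (α (p / N + 1) (p % N + 1) • X (p % N + 1)))
          + (∑ q ∈ Finset.range p, α (q / N + 1) (q % N + 1) • X (q % N + 1))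
              * (α (p / N + 1) (p % N + 1) • X (p % N + 1)))
      = (2 : ℂ)⁻¹ • ((∑ ℓ ∈ Finset.Icc 1 N, (∑ k ∈ Finset.Icc 1 s, α k ℓ) • X ℓ)
            * ∑ ℓ ∈ Finset.Icc 1 N, (∑ k ∈ Finset.Icc 1 s, α k ℓ) • X ℓ)
        + ∑ ℓ₁ ∈ Finset.Icc 1 (N - 1), ∑ ℓ₂ ∈ Finset.Icc (ℓ₁ + 1) N,
            ((1 / 2 : ℂ) * ∑ k ∈ Finset.Icc 1 s,
                (α k ℓ₂ * (∑ j ∈ Finset.Icc 1 k, α j ℓ₁)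
                  - α k ℓ₁ * (∑ j ∈ Finset.Icc 1 (k - 1), α j ℓ₂)))
              • (X ℓ₁ * X ℓ₂ - X ℓ₂ * X ℓ₁) := by
  calc
    ∑ p ∈ Finset.range (s * N),
        ((2 : ℂ)⁻¹ • ((α (p / N + 1) (p % N + 1) • X (p % N + 1))
              * (α (p / N + 1) (p % N + 1) • X (p % N + 1)))
          + (∑ q ∈ Finset.range p, α (q / N + 1) (q % N + 1) • X (q % N + 1))
              * (α (p / N + 1) (p % N + 1) • X (p % N + 1)))
      = (2 : ℂ)⁻¹ • ((∑ p ∈ Finset.range (s * N), α (p / N + 1) (p % N + 1) • X (p % N + 1))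
            * ∑ p ∈ Finset.range (s * N), α (p / N + 1) (p % N + 1) • X (p % N + 1))
        + (2 : ℂ)⁻¹ • ∑ p ∈ Finset.range (s * N), ∑ q ∈ Finset.range p,
            ((α (q / N + 1) (q % N + 1) • X (q % N + 1))
                * (α (p / N + 1) (p % N + 1) • X (p % N + 1))
              - (α (p / N + 1) (p % N + 1) • X (p % N + 1))
                * (α (q / N + 1) (q % N + 1) • X (q % N + 1))) :=
        half_split (s * N) (fun p => α (p / N + 1) (p % N + 1) • X (p % N + 1))
    _ = (2 : ℂ)⁻¹ • ((∑ ℓ ∈ Finset.Icc 1 N, (∑ k ∈ Finset.Icc 1 s, α k ℓ) • X ℓ)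
            * ∑ ℓ ∈ Finset.Icc 1 N, (∑ k ∈ Finset.Icc 1 s, α k ℓ) • X ℓ)
        + ∑ ℓ₁ ∈ Finset.Icc 1 (N - 1), ∑ ℓ₂ ∈ Finset.Icc (ℓ₁ + 1) N,
            ((1 / 2 : ℂ) * ∑ k ∈ Finset.Icc 1 s,
                (α k ℓ₂ * (∑ j ∈ Finset.Icc 1 k, α j ℓ₁)
                  - α k ℓ₁ * (∑ j ∈ Finset.Icc 1 (k - 1), α j ℓ₂)))
              • (X ℓ₁ * X ℓ₂ - X ℓ₂ * X ℓ₁) := by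
        rw [bB_eq s N X α, T_step s N X α, final_match s N X α]
end Main


/-- **Second-order exponential expansion of a general `s`-stage, `N`-split
operator-splitting product.**  With
`C_{ℓ₁,ℓ₂} = (1/2) ∑_{k=1}^{s} (α_k^{[ℓ₂]} (∑_{j=1}^{k} α_j^{[ℓ₁]}) −
α_k^{[ℓ₁]} (∑_{j=1}^{k−1} α_j^{[ℓ₂]}))`, as real `t → 0`,
`‖P(t) − exp(t ∑_ℓ (∑_k α_k^{[ℓ]}) X_ℓ + t² ∑_{ℓ₁<ℓ₂} C_{ℓ₁,ℓ₂} [X_{ℓ₁},X_{ℓ₂}])‖ = O(|t|³)`. -/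
theorem splitting_product_second_order_expansion {A : Type*} [NormedRing A]
    [NormedAlgebra ℂ A] [CompleteSpace A] (s N : ℕ) (hs : 1 ≤ s) (hN : 1 ≤ N)
    (X : ℕ → A) (α : ℕ → ℕ → ℂ) :
    (fun t : ℝ =>
        ((List.range s).map (fun k =>
            ((List.range N).map (fun ℓ =>
                NormedSpace.exp ((α (k + 1) (ℓ + 1) * (t : ℂ)) • X (ℓ + 1)))).prod)).prod -
          NormedSpace.exp
            ((t : ℂ) • ∑ ℓ ∈ Finset.Icc 1 N, (∑ k ∈ Finset.Icc 1 s, α k ℓ) • X ℓ +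
              ((t : ℂ) ^ 2) •
                ∑ ℓ₁ ∈ Finset.Icc 1 (N - 1), ∑ ℓ₂ ∈ Finset.Icc (ℓ₁ + 1) N,
                  ((1 / 2 : ℂ) * ∑ k ∈ Finset.Icc 1 s,
                      (α k ℓ₂ * (∑ j ∈ Finset.Icc 1 k, α j ℓ₁) -
                        α k ℓ₁ * (∑ j ∈ Finset.Icc 1 (k - 1), α j ℓ₂))) •
                    (X ℓ₁ * X ℓ₂ - X ℓ₂ * X ℓ₁)))
      =O[nhds (0 : ℝ)] fun t : ℝ => |t| ^ 3 := by
  have hprod : IsExp2 (fun t : ℝ =>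
      ((List.range s).map (fun k =>
          ((List.range N).map (fun ℓ =>
              NormedSpace.exp ((α (k + 1) (ℓ + 1) * (t : ℂ)) • X (ℓ + 1)))).prod)).prod)
      1
      (∑ p ∈ Finset.range (s * N), α (p / N + 1) (p % N + 1) • X (p % N + 1))
      (∑ p ∈ Finset.range (s * N),
        ((2 : ℂ)⁻¹ • ((α (p / N + 1) (p % N + 1) • X (p % N + 1))
              * (α (p / N + 1) (p % N + 1) • X (p % N + 1)))
          + (∑ q ∈ Finset.range p, α (q / N + 1) (q % N + 1) • X (q % N + 1))
              * (α (p / N + 1) (p % N + 1) • X (p % N + 1)))) := by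
    have h1 := isExp2_prod_range
      (fun p t => NormedSpace.exp ((α (p / N + 1) (p % N + 1) * (t : ℂ)) • X (p % N + 1)))
      (fun p => α (p / N + 1) (p % N + 1) • X (p % N + 1))
      (fun p => (2 : ℂ)⁻¹ • ((α (p / N + 1) (p % N + 1) • X (p % N + 1))
          * (α (p / N + 1) (p % N + 1) • X (p % N + 1))))
      (fun p => isExp2_exp_linear _ _) (s * N)
    exact IsExp2.congr_fun h1 (fun t => list_prod_flatten
      (fun k ℓ => NormedSpace.exp ((α (k + 1) (ℓ + 1) * (t : ℂ)) • X (ℓ + 1))) N s)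
  have hexp := isExp2_exp_quadratic
    (∑ ℓ ∈ Finset.Icc 1 N, (∑ k ∈ Finset.Icc 1 s, α k ℓ) • X ℓ)
    (∑ ℓ₁ ∈ Finset.Icc 1 (N - 1), ∑ ℓ₂ ∈ Finset.Icc (ℓ₁ + 1) N,
      ((1 / 2 : ℂ) * ∑ k ∈ Finset.Icc 1 s,
          (α k ℓ₂ * (∑ j ∈ Finset.Icc 1 k, α j ℓ₁)
            - α k ℓ₁ * (∑ j ∈ Finset.Icc 1 (k - 1), α j ℓ₂)))
        • (X ℓ₁ * X ℓ₂ - X ℓ₂ * X ℓ₁))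
  exact IsExp2.sub_isBigO
    (IsExp2.congr_coeffs hprod rfl (bB_eq s N X α) (coeff_main s N X α)) hexp
end

section
/- Let N > 2 be an integer and let α_k^{[ℓ]} ∈ ℂ for k = 1, 2 and ℓ = 1,…,N. Then the two-stage order conditions α_1^{[ℓ]} + α_2^{[ℓ]} = 1 (for all ℓ = 1,…,N) and α_2^{[ℓ₁]}·α_1^{[ℓ₂]} = 1/2 (for all 1 ≤ ℓ₁ < ℓ₂ ≤ N) hold if and only if either α_1^{[ℓ]} = 1/2 + i/2 and α_2^{[ℓ]} = 1/2 − i/2 for every ℓ, or α_1^{[ℓ]} = 1/2 − i/2 and α_2^{[ℓ]} = 1/2 + i/2 for every ℓ. In particular, there are exactly two two-stage, second-order, N-split operator-splitting methods for N > 2, and they are complex conjugates of each other. -/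
open scoped BigOperators

/-- **The only two-stage, second-order, `N`-split operator-splitting methods for
`N > 2`** have coefficients `α_1^{[ℓ]} = 1/2 ± i/2`, `α_2^{[ℓ]} = 1/2 ∓ i/2` for
every `ℓ`; i.e., the two-stage order conditions hold iff the coefficients are one
of these two conjugate methods. -/
theorem two_stage_second_order_Nsplit_classification (N : ℕ) (hN : 2 < N)
    (α : ℕ → ℕ → ℂ) :
    ((∀ ℓ, 1 ≤ ℓ → ℓ ≤ N → α 1 ℓ + α 2 ℓ = 1) ∧
      (∀ ℓ₁ ℓ₂, 1 ≤ ℓ₁ → ℓ₁ < ℓ₂ → ℓ₂ ≤ N → α 2 ℓ₁ * α 1 ℓ₂ = 1 / 2)) ↔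
    ((∀ ℓ, 1 ≤ ℓ → ℓ ≤ N →
        α 1 ℓ = 1 / 2 + Complex.I / 2 ∧ α 2 ℓ = 1 / 2 - Complex.I / 2) ∨
      (∀ ℓ, 1 ≤ ℓ → ℓ ≤ N →
        α 1 ℓ = 1 / 2 - Complex.I / 2 ∧ α 2 ℓ = 1 / 2 + Complex.I / 2)) := by
  have hN2 : (2 : ℕ) ≤ N := le_of_lt hN
  constructor
  · rintro ⟨h1, h2⟩
    have e12 : α 2 1 * α 1 2 = 1 / 2 := h2 1 2 le_rfl one_lt_two hN2
    have e1N : α 2 1 * α 1 N = 1 / 2 := h2 1 N le_rfl (lt_of_lt_of_le one_lt_two hN2) le_rfl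
    have e2N : α 2 2 * α 1 N = 1 / 2 := h2 2 N one_le_two hN le_rfl
    have hb1 : α 2 1 ≠ 0 := by
      intro h; rw [h, zero_mul] at e12; norm_num at e12
    have haN : α 1 N ≠ 0 := by
      intro h; rw [h, mul_zero] at e1N; norm_num at e1N
    have ha2N : α 1 2 = α 1 N := by
      have := e12.trans e1N.symm
      exact mul_left_cancel₀ hb1 this
    have hb12 : α 2 2 = α 2 1 := by
      have := e2N.trans e1N.symm
      exact mul_right_cancel₀ haN this
    have hs1 : α 1 1 + α 2 1 = 1 := h1 1 le_rfl (le_of_lt (lt_trans one_lt_two hN))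
    have hs2 : α 1 2 + α 2 2 = 1 := h1 2 one_le_two hN2
    have ha12 : α 1 2 = α 1 1 := by
      have : α 1 2 + α 2 1 = 1 := by rw [← hb12]; exact hs2
      linear_combination this - hs1
    -- all α 1 ℓ equal α 1 1, and α 2 ℓ = 1 - α 1 1
    set a := α 1 1 with ha
    have key : ∀ ℓ, 1 ≤ ℓ → ℓ ≤ N → α 1 ℓ = a ∧ α 2 ℓ = 1 - a := by
      intro ℓ hl1 hlN
      rcases eq_or_lt_of_le hl1 with h | h
      · refine ⟨h ▸ rfl, ?_⟩
        have := hs1; rw [← h] at *; linear_combination hs1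
      · have e1l : α 2 1 * α 1 ℓ = 1 / 2 := h2 1 ℓ le_rfl h hlN
        have hal : α 1 ℓ = a := by
          have := e1l.trans e12.symm
          have := mul_left_cancel₀ hb1 this
          rw [this, ha12]
        refine ⟨hal, ?_⟩
        have := h1 ℓ hl1 hlN
        rw [hal] at this
        linear_combination this
    have quad : (1 - a) * a = 1 / 2 := by
      have := e12
      rw [ha12] at this
      have hb : α 2 1 = 1 - a := by linear_combination hs1
      rw [hb] at this; exact this
    have hfac : (a - (1 / 2 + Complex.I / 2)) * (a - (1 / 2 - Complex.I / 2)) = 0 := by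
      linear_combination (-1 : ℂ) * quad - (1 / 4 : ℂ) * Complex.I_sq
    rcases mul_eq_zero.mp hfac with hc | hc
    · left
      intro ℓ hl1 hlN
      obtain ⟨p, q⟩ := key ℓ hl1 hlN
      have haa : a = 1 / 2 + Complex.I / 2 := by linear_combination hc
      constructor
      · rw [p, haa]
      · rw [q, haa]; ring
    · right
      intro ℓ hl1 hlN
      obtain ⟨p, q⟩ := key ℓ hl1 hlN
      have haa : a = 1 / 2 - Complex.I / 2 := by linear_combination hc
      constructor
      · rw [p, haa]
      · rw [q, haa]; ring
  · rintro (h | h) <;>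
    · constructor
      · intro ℓ hl1 hlN
        obtain ⟨p, q⟩ := h ℓ hl1 hlN
        rw [p, q]; ring
      · intro ℓ₁ ℓ₂ hl1 hlt hlN
        obtain ⟨_, q⟩ := h ℓ₁ hl1 (le_of_lt (lt_of_lt_of_le hlt hlN))
        obtain ⟨p, _⟩ := h ℓ₂ (le_of_lt (lt_of_le_of_lt hl1 hlt)) hlN
        rw [p, q]
        linear_combination (-(1 : ℂ) / 4) * Complex.I_sq
end

section
/- Let N > 2 be an integer and suppose α_k^{[ℓ]} ∈ ℂ (k = 1, 2; ℓ = 1,…,N) satisfy α_1^{[ℓ]} + α_2^{[ℓ]} = 1 for all ℓ = 1,…,N and α_2^{[ℓ₁]}·α_1^{[ℓ₂]} = 1/2 for all 1 ≤ ℓ₁ < ℓ₂ ≤ N. Then all first-stage coefficients are equal to a common value γ (i.e., α_1^{[1]} = α_1^{[2]} = ⋯ = α_1^{[N]} = γ), all second-stage coefficients are equal to a common value η (i.e., α_2^{[1]} = ⋯ = α_2^{[N]} = η), and γ + η = 1 and γ·η = 1/2. -/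
open scoped BigOperators

/-- If the two-stage order conditions for an `N`-split method with `N > 2` hold,
then all first-stage coefficients equal a common value `γ`, all second-stage
coefficients equal a common value `η`, and `γ + η = 1`, `γ·η = 1/2`. -/
theorem two_stage_coefficients_common_values (N : ℕ) (hN : 2 < N)
    (α : ℕ → ℕ → ℂ)
    (h1 : ∀ ℓ, 1 ≤ ℓ → ℓ ≤ N → α 1 ℓ + α 2 ℓ = 1)
    (h2 : ∀ ℓ₁ ℓ₂, 1 ≤ ℓ₁ → ℓ₁ < ℓ₂ → ℓ₂ ≤ N → α 2 ℓ₁ * α 1 ℓ₂ = 1 / 2) :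
    ∃ γ η : ℂ, (∀ ℓ, 1 ≤ ℓ → ℓ ≤ N → α 1 ℓ = γ ∧ α 2 ℓ = η) ∧
      γ + η = 1 ∧ γ * η = 1 / 2 := by
  set γ := α 1 2 with hγ
  set η := α 2 1 with hη
  have hN2 : 2 ≤ N := le_of_lt hN
  have h12 : η * γ = 1 / 2 := h2 1 2 le_rfl one_lt_two hN2
  have hηne : η ≠ 0 := by
    intro h; rw [h, zero_mul] at h12; norm_num at h12
  have hγne : γ ≠ 0 := by
    intro h; rw [h, mul_zero] at h12; norm_num at h12
  -- all α 1 ℓ for 2 ≤ ℓ ≤ N equal γ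
  have key1 : ∀ ℓ, 2 ≤ ℓ → ℓ ≤ N → α 1 ℓ = γ := by
    intro ℓ h2ℓ hℓN
    have := h2 1 ℓ le_rfl (by omega) hℓN
    have := h12.trans this.symm
    exact (mul_left_cancel₀ hηne this).symm
  have hα1N : α 1 N = γ := key1 N hN2 le_rfl
  have hα1Nne : α 1 N ≠ 0 := hα1N ▸ hγne
  -- all α 2 ℓ for 1 ≤ ℓ < N equal η
  have key2 : ∀ ℓ, 1 ≤ ℓ → ℓ < N → α 2 ℓ = η := by
    intro ℓ h1ℓ hℓN
    have hA := h2 ℓ N h1ℓ hℓN le_rfl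
    have hB := h2 1 N le_rfl (by omega) le_rfl
    have := hA.trans hB.symm
    exact mul_right_cancel₀ hα1Nne this
  have hsum : γ + η = 1 := by
    have := h1 2 (by omega) hN2
    rw [key1 2 le_rfl hN2, key2 2 (by omega) hN] at this
    exact this
  refine ⟨γ, η, ?_, hsum, by linear_combination h12⟩
  intro ℓ h1ℓ hℓN
  constructor
  · rcases eq_or_lt_of_le h1ℓ with h | h
    · have := h1 1 le_rfl (by omega)
      rw [← hη] at this
      rw [← h]
      linear_combination this - hsum
    · exact key1 ℓ h hℓN
  · rcases eq_or_lt_of_le hℓN with h | h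
    · have := h1 N (by omega) le_rfl
      rw [hα1N] at this
      rw [h]
      linear_combination this - hsum
    · exact key2 ℓ h1ℓ h
end

section
/- Let A be a complex unital Banach algebra, let N ≥ 1, and let X_1, …, X_N ∈ A. Set γ = 1/2 + i/2 and η = 1/2 − i/2, and define the complex Lie–Trotter (CLT2) product P(t) := exp(γ t X_1)·exp(γ t X_2) ⋯ exp(γ t X_N) · exp(η t X_1)·exp(η t X_2) ⋯ exp(η t X_N). Then, as real t → 0, ‖P(t) − exp(t·(X_1 + ⋯ + X_N))‖ = O(|t|³); that is, the CLT2 method is second-order accurate for every N. -/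
open scoped BigOperators
open NormedSpace Asymptotics Filter
open scoped Nat
set_option maxHeartbeats 1000000

section CLT2aux

variable {A : Type*} [NormedRing A] [NormedAlgebra ℂ A] [CompleteSpace A]

/-- Second-order jet predicate: `f t = a₀ + t a₁ + t² a₂ + O(|t|³)`. -/
def CLT2Jet (f : ℝ → A) (a₀ a₁ a₂ : A) : Prop :=
  (fun t : ℝ => f t - (a₀ + (t : ℂ) • a₁ + ((t : ℂ) ^ 2) • a₂)) =O[nhds (0 : ℝ)]
    fun t : ℝ => |t| ^ 3

lemma clt2jet_exp (c : ℂ) (X : A) :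
    CLT2Jet (fun t : ℝ => exp ((c * (t : ℂ)) • X)) 1 (c • X) ((c ^ 2 / 2) • (X * X)) := by
  rw [CLT2Jet, isBigO_iff]
  refine ⟨Real.exp ‖X‖ * (‖c‖ + 1) ^ 3, ?_⟩
  have hev : ∀ᶠ t : ℝ in nhds 0, |t| * (‖c‖ + 1) ≤ 1 := by
    have h : Tendsto (fun t : ℝ => |t| * (‖c‖ + 1)) (nhds 0) (nhds (|0| * (‖c‖ + 1))) := by
      exact ((continuous_abs.mul continuous_const).tendsto 0)
    simp only [abs_zero, zero_mul] at h
    exact h.eventually_le_const (by norm_num)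
  filter_upwards [hev] with t ht
  set z : ℂ := c * (t : ℂ) with hz
  have hz1 : ‖z‖ ≤ 1 := by
    have : ‖z‖ = ‖c‖ * |t| := by
      rw [hz, norm_mul, Complex.norm_real, Real.norm_eq_abs]
    rw [this]
    nlinarith [abs_nonneg t, norm_nonneg c]
  -- power series for exp (z • X)
  have hs : HasSum (fun n : ℕ => (z ^ n / n !) • X ^ n) (exp (z • X)) := by
    have h := NormedSpace.exp_series_hasSum_exp' (𝕂 := ℂ) (z • X)
    have hterm : ∀ n : ℕ, ((n ! : ℂ)⁻¹) • (z • X) ^ n = (z ^ n / n !) • X ^ n := by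
      intro n
      rw [smul_pow, smul_smul, div_eq_mul_inv, mul_comm]
    simpa only [hterm] using h
  have htail : HasSum (fun n : ℕ => (z ^ (n + 3) / (n + 3)!) • X ^ (n + 3))
      (exp (z • X) - ∑ i ∈ Finset.range 3, (z ^ i / i !) • X ^ i) :=
    (hasSum_nat_add_iff' 3).mpr hs
  have hsum3 : ∑ i ∈ Finset.range 3, (z ^ i / i !) • X ^ i
      = 1 + z • X + (z ^ 2 / 2) • (X * X) := by
    rw [Finset.sum_range_succ, Finset.sum_range_succ, Finset.sum_range_one]
    norm_num [pow_two]
  -- summability of the norms, with bound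
  have hbound : ∀ n : ℕ, ‖(z ^ (n + 3) / (n + 3)!) • X ^ (n + 3)‖
      ≤ ‖z‖ ^ 3 * (‖X‖ ^ (n + 3) / (n + 3)!) := by
    intro n
    have h1 : ‖z‖ ^ (n + 3) ≤ ‖z‖ ^ 3 :=
      pow_le_pow_of_le_one (norm_nonneg z) hz1 (by omega)
    have h2 : ‖X ^ (n + 3)‖ ≤ ‖X‖ ^ (n + 3) := norm_pow_le' X (by omega)
    have h3 : ‖(z ^ (n + 3) / ((n + 3)! : ℂ)) • X ^ (n + 3)‖
        = ‖z‖ ^ (n + 3) / ((n + 3)! : ℝ) * ‖X ^ (n + 3)‖ := by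
      rw [norm_smul, norm_div, norm_pow]
      norm_num
    rw [h3, div_mul_eq_mul_div, mul_div_assoc' (‖z‖ ^ 3)]
    gcongr
  have hbsumm : Summable (fun n : ℕ => ‖X‖ ^ (n + 3) / ((n + 3)! : ℝ)) :=
    (summable_nat_add_iff 3).mpr (Real.summable_pow_div_factorial ‖X‖)
  have hnsumm : Summable (fun n : ℕ => ‖(z ^ (n + 3) / (n + 3)!) • X ^ (n + 3)‖) := by
    refine Summable.of_nonneg_of_le (fun n => norm_nonneg _) hbound (hbsumm.mul_left _)
  -- the tail sum bound
  have hb_le : ∑' n : ℕ, (‖X‖ ^ (n + 3) / ((n + 3)! : ℝ)) ≤ Real.exp ‖X‖ := by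
    have hall : Summable (fun n : ℕ => ‖X‖ ^ n / (n ! : ℝ)) :=
      Real.summable_pow_div_factorial ‖X‖
    have := Summable.sum_add_tsum_nat_add (f := fun n : ℕ => ‖X‖ ^ n / (n ! : ℝ)) 3 hall
    have hexp : ∑' n : ℕ, ‖X‖ ^ n / (n ! : ℝ) = Real.exp ‖X‖ := by
      rw [Real.exp_eq_exp_ℝ, NormedSpace.exp_eq_tsum_div]
    have hpos : 0 ≤ ∑ i ∈ Finset.range 3, ‖X‖ ^ i / (i ! : ℝ) := by positivity
    rw [hexp] at this
    linarith
  have hnorm : ‖exp (z • X) - (1 + z • X + (z ^ 2 / 2) • (X * X))‖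
      ≤ ‖z‖ ^ 3 * Real.exp ‖X‖ := by
    rw [← hsum3, ← htail.tsum_eq]
    calc ‖∑' n : ℕ, (z ^ (n + 3) / (n + 3)!) • X ^ (n + 3)‖
        ≤ ∑' n : ℕ, ‖(z ^ (n + 3) / (n + 3)!) • X ^ (n + 3)‖ := norm_tsum_le_tsum_norm hnsumm
      _ ≤ ∑' n : ℕ, ‖z‖ ^ 3 * (‖X‖ ^ (n + 3) / ((n + 3)! : ℝ)) :=
          Summable.tsum_le_tsum hbound hnsumm (hbsumm.mul_left _)
      _ = ‖z‖ ^ 3 * ∑' n : ℕ, (‖X‖ ^ (n + 3) / ((n + 3)! : ℝ)) := tsum_mul_left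
      _ ≤ ‖z‖ ^ 3 * Real.exp ‖X‖ := by
          have := pow_nonneg (norm_nonneg z) 3
          exact mul_le_mul_of_nonneg_left hb_le this
  -- assemble
  have hpoly : (1 : A) + (t : ℂ) • (c • X) + ((t : ℂ) ^ 2) • ((c ^ 2 / 2) • (X * X))
      = 1 + z • X + (z ^ 2 / 2) • (X * X) := by
    rw [smul_smul, smul_smul]
    congr 2
    · rw [hz]; ring
    · rw [hz]; ring
  rw [hpoly]
  have hzt : ‖z‖ ≤ (‖c‖ + 1) * |t| := by
    have : ‖z‖ = ‖c‖ * |t| := by rw [hz, norm_mul, Complex.norm_real, Real.norm_eq_abs]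
    nlinarith [abs_nonneg t]
  calc ‖exp (z • X) - (1 + z • X + (z ^ 2 / 2) • (X * X))‖
      ≤ ‖z‖ ^ 3 * Real.exp ‖X‖ := hnorm
    _ ≤ ((‖c‖ + 1) * |t|) ^ 3 * Real.exp ‖X‖ := by
        have h3 : ‖z‖ ^ 3 ≤ ((‖c‖ + 1) * |t|) ^ 3 :=
          pow_le_pow_left₀ (norm_nonneg z) hzt 3
        exact mul_le_mul_of_nonneg_right h3 (Real.exp_pos _).le
    _ = Real.exp ‖X‖ * (‖c‖ + 1) ^ 3 * ‖|t| ^ 3‖ := by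
        rw [Real.norm_eq_abs, abs_pow, abs_abs]
        ring


lemma clt2_cube_isBigO {k : ℕ} (hk : 3 ≤ k) (u : A) :
    (fun t : ℝ => ((t : ℂ) ^ k) • u) =O[nhds (0 : ℝ)] fun t : ℝ => |t| ^ 3 := by
  rw [isBigO_iff]
  refine ⟨‖u‖, ?_⟩
  have hev : ∀ᶠ t : ℝ in nhds 0, |t| ≤ 1 := by
    have h : Tendsto (fun t : ℝ => |t|) (nhds 0) (nhds |0|) := continuous_abs.tendsto 0
    simp only [abs_zero] at h
    exact h.eventually_le_const (by norm_num)
  filter_upwards [hev] with t ht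
  rw [norm_smul, norm_pow, Complex.norm_real, Real.norm_eq_abs, Real.norm_eq_abs,
    abs_pow, abs_abs]
  have h1 : |t| ^ k ≤ |t| ^ 3 := pow_le_pow_of_le_one (abs_nonneg t) ht hk
  calc |t| ^ k * ‖u‖ ≤ |t| ^ 3 * ‖u‖ := by gcongr
    _ = ‖u‖ * |t| ^ 3 := by ring

lemma CLT2Jet.isBigO_one {f : ℝ → A} {a₀ a₁ a₂ : A} (h : CLT2Jet f a₀ a₁ a₂) :
    f =O[nhds (0 : ℝ)] fun _ : ℝ => (1 : ℝ) := by
  have hPc : Continuous (fun t : ℝ => a₀ + (t : ℂ) • a₁ + ((t : ℂ) ^ 2) • a₂) := by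
    fun_prop
  have hP := hPc.tendsto 0
  have h1 : (fun t : ℝ => f t - (a₀ + (t : ℂ) • a₁ + ((t : ℂ) ^ 2) • a₂))
      =O[nhds (0 : ℝ)] (fun _ : ℝ => (1 : ℝ)) := by
    refine h.trans ?_
    simpa using (((continuous_abs.pow 3).tendsto (0 : ℝ))).isBigO_one ℝ
  have h2 : (fun t : ℝ => a₀ + (t : ℂ) • a₁ + ((t : ℂ) ^ 2) • a₂)
      =O[nhds (0 : ℝ)] (fun _ : ℝ => (1 : ℝ)) := hP.isBigO_one ℝ
  simpa using h1.add h2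

lemma CLT2Jet.mul {f g : ℝ → A} {a₀ a₁ a₂ b₀ b₁ b₂ : A}
    (hf : CLT2Jet f a₀ a₁ a₂) (hg : CLT2Jet g b₀ b₁ b₂) :
    CLT2Jet (fun t => f t * g t) (a₀ * b₀) (a₀ * b₁ + a₁ * b₀)
      (a₀ * b₂ + a₁ * b₁ + a₂ * b₀) := by
  have key : ∀ t : ℝ,
      f t * g t - ((a₀ * b₀) + (t : ℂ) • (a₀ * b₁ + a₁ * b₀)
        + ((t : ℂ) ^ 2) • (a₀ * b₂ + a₁ * b₁ + a₂ * b₀))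
      = (f t - (a₀ + (t : ℂ) • a₁ + ((t : ℂ) ^ 2) • a₂)) * g t
        + (a₀ + (t : ℂ) • a₁ + ((t : ℂ) ^ 2) • a₂)
            * (g t - (b₀ + (t : ℂ) • b₁ + ((t : ℂ) ^ 2) • b₂))
        + (((t : ℂ) ^ 3) • (a₁ * b₂ + a₂ * b₁) + ((t : ℂ) ^ 4) • (a₂ * b₂)) := by
    intro t
    simp only [mul_add, add_mul, sub_mul, mul_sub, smul_mul_assoc, mul_smul_comm,
      smul_smul, smul_add]
    module
  have hPO : (fun t : ℝ => a₀ + (t : ℂ) • a₁ + ((t : ℂ) ^ 2) • a₂)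
      =O[nhds (0 : ℝ)] (fun _ : ℝ => (1 : ℝ)) := by
    have hPc : Continuous (fun t : ℝ => a₀ + (t : ℂ) • a₁ + ((t : ℂ) ^ 2) • a₂) := by
      fun_prop
    exact (hPc.tendsto 0).isBigO_one ℝ
  have h1 : (fun t : ℝ => (f t - (a₀ + (t : ℂ) • a₁ + ((t : ℂ) ^ 2) • a₂)) * g t)
      =O[nhds (0 : ℝ)] fun t : ℝ => |t| ^ 3 := by
    simpa using Asymptotics.IsBigO.mul (f₁ := fun t : ℝ =>
      f t - (a₀ + (t : ℂ) • a₁ + ((t : ℂ) ^ 2) • a₂)) hf hg.isBigO_one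
  have h2 : (fun t : ℝ => (a₀ + (t : ℂ) • a₁ + ((t : ℂ) ^ 2) • a₂)
      * (g t - (b₀ + (t : ℂ) • b₁ + ((t : ℂ) ^ 2) • b₂)))
      =O[nhds (0 : ℝ)] fun t : ℝ => |t| ^ 3 := by
    simpa using Asymptotics.IsBigO.mul hPO (f₂ := fun t : ℝ =>
      g t - (b₀ + (t : ℂ) • b₁ + ((t : ℂ) ^ 2) • b₂)) hg
  have h3 : (fun t : ℝ => ((t : ℂ) ^ 3) • (a₁ * b₂ + a₂ * b₁) + ((t : ℂ) ^ 4) • (a₂ * b₂))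
      =O[nhds (0 : ℝ)] fun t : ℝ => |t| ^ 3 :=
    (clt2_cube_isBigO le_rfl _).add (clt2_cube_isBigO (by norm_num) _)
  rw [CLT2Jet]
  simp only [key]
  exact (h1.add h2).add h3


lemma clt2jet_one : CLT2Jet (fun _ : ℝ => (1 : A)) 1 0 0 := by
  rw [CLT2Jet]
  simp only [smul_zero, add_zero, sub_self]
  exact isBigO_zero _ _

/-- Second-order coefficient of a product of exponentials. -/
noncomputable def clt2W : List A → A
  | [] => 0
  | Y :: L => (2 : ℂ)⁻¹ • (Y * Y) + Y * L.sum + clt2W L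

lemma clt2jet_prod (c : ℂ) (L : List A) :
    CLT2Jet (fun t : ℝ => (L.map (fun Y => exp ((c * (t : ℂ)) • Y))).prod)
      1 (c • L.sum) ((c ^ 2) • clt2W L) := by
  induction L with
  | nil => simpa [clt2W] using clt2jet_one (A := A)
  | cons Y L ih =>
    have h := (clt2jet_exp c Y).mul ih
    have e₁ : (1 : A) * 1 = 1 := one_mul 1
    have e₂ : (1 : A) * (c • L.sum) + (c • Y) * 1 = c • (Y :: L).sum := by
      simp only [one_mul, mul_one, List.sum_cons, smul_add]
      exact add_comm _ _
    have e₃ : (1 : A) * ((c ^ 2) • clt2W L) + (c • Y) * (c • L.sum)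
        + ((c ^ 2 / 2) • (Y * Y)) * 1 = (c ^ 2) • clt2W (Y :: L) := by
      simp only [one_mul, mul_one, clt2W, smul_mul_assoc, mul_smul_comm, smul_add,
        smul_smul]
      module
    rw [e₁, e₂, e₃] at h
    simpa only [List.map_cons, List.prod_cons] using h

lemma clt2_sum_range (X : ℕ → A) (N : ℕ) :
    ((List.range N).map (fun ℓ => X (ℓ + 1))).sum = ∑ ℓ ∈ Finset.Icc 1 N, X ℓ := by
  induction N with
  | zero => simp
  | succ n ih =>
    rw [List.range_succ, List.map_append, List.sum_append, ih,
      Finset.sum_Icc_succ_top (Nat.succ_le_succ (Nat.zero_le n))]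
    simp

end CLT2aux

/-- **The complex Lie–Trotter (CLT2) method is second-order accurate for every `N`.**
With `γ = 1/2 + i/2`, `η = 1/2 − i/2` and
`P(t) = exp(γtX₁)⋯exp(γtX_N)·exp(ηtX₁)⋯exp(ηtX_N)`, as real `t → 0`,
`‖P(t) − exp(t(X₁ + ⋯ + X_N))‖ = O(|t|³)`. -/
theorem CLT2_second_order {A : Type*} [NormedRing A] [NormedAlgebra ℂ A]
    [CompleteSpace A] (N : ℕ) (hN : 1 ≤ N) (X : ℕ → A) :
    (fun t : ℝ =>
        ((List.range N).map (fun ℓ =>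
            NormedSpace.exp (((1 / 2 + Complex.I / 2) * (t : ℂ)) • X (ℓ + 1)))).prod *
          ((List.range N).map (fun ℓ =>
            NormedSpace.exp (((1 / 2 - Complex.I / 2) * (t : ℂ)) • X (ℓ + 1)))).prod -
          NormedSpace.exp ((t : ℂ) • ∑ ℓ ∈ Finset.Icc 1 N, X ℓ))
      =O[nhds (0 : ℝ)] fun t : ℝ => |t| ^ 3 := by
  set γ : ℂ := 1 / 2 + Complex.I / 2 with hγ
  set η : ℂ := 1 / 2 - Complex.I / 2 with hη
  set L : List A := (List.range N).map (fun ℓ => X (ℓ + 1)) with hL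
  have hS : L.sum = ∑ ℓ ∈ Finset.Icc 1 N, X ℓ := clt2_sum_range X N
  -- jets of the two partial products
  have hγjet := clt2jet_prod γ L
  have hηjet := clt2jet_prod η L
  have h := hγjet.mul hηjet
  -- coefficient identities
  have hsum : γ + η = 1 := by rw [hγ, hη]; ring
  have hsq : γ ^ 2 + η ^ 2 = 0 := by
    rw [hγ, hη]; linear_combination (1 / 2 : ℂ) * Complex.I_sq
  have hprodc : γ * η = 2⁻¹ := by
    rw [hγ, hη]; linear_combination (-1 / 4 : ℂ) * Complex.I_sq
  have e₁ : (1 : A) * 1 = 1 := one_mul 1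
  have e₂ : (1 : A) * (η • L.sum) + (γ • L.sum) * 1 = L.sum := by
    simp only [one_mul, mul_one]
    rw [← add_smul, add_comm η γ, hsum, one_smul]
  have e₃ : (1 : A) * ((η ^ 2) • clt2W L) + (γ • L.sum) * (η • L.sum)
      + ((γ ^ 2) • clt2W L) * 1 = (2 : ℂ)⁻¹ • (L.sum * L.sum) := by
    simp only [one_mul, mul_one, smul_mul_assoc, mul_smul_comm, smul_smul]
    rw [show (η : ℂ) * γ = 2⁻¹ from by rw [mul_comm]; exact hprodc]
    have : (η ^ 2) • clt2W L + (γ ^ 2) • clt2W L = 0 := by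
      rw [← add_smul, add_comm (η ^ 2) (γ ^ 2), hsq, zero_smul]
    linear_combination (norm := module) this
  rw [e₁, e₂, e₃] at h
  -- jet of the exponential of the sum
  have hexp := clt2jet_exp (A := A) 1 L.sum
  simp only [one_mul, one_smul, one_pow] at hexp
  rw [show ((1 : ℂ) / 2) • (L.sum * L.sum) = (2 : ℂ)⁻¹ • (L.sum * L.sum) by norm_num] at hexp
  -- subtract
  rw [CLT2Jet] at h hexp
  have := h.sub hexp
  simp only [sub_sub_sub_cancel_right] at this
  -- identify functions
  have hfun : (fun t : ℝ =>
      ((List.range N).map (fun ℓ => exp ((γ * (t : ℂ)) • X (ℓ + 1)))).prod *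
        ((List.range N).map (fun ℓ => exp ((η * (t : ℂ)) • X (ℓ + 1)))).prod -
        exp ((t : ℂ) • ∑ ℓ ∈ Finset.Icc 1 N, X ℓ))
      = (fun t : ℝ =>
      (L.map (fun Y => exp ((γ * (t : ℂ)) • Y))).prod *
        (L.map (fun Y => exp ((η * (t : ℂ)) • Y))).prod - exp ((t : ℂ) • L.sum)) := by
    funext t
    rw [hS, hL]
    simp [List.map_map, Function.comp_def]
  rw [hfun]
  exact this
end

section
/- Let p ≥ 2 be an integer and define the composition coefficients σ_{p,1} := 1/2 + i·sin(π/p)/(2 + 2cos(π/p)) and σ_{p,2} := conj(σ_{p,1}). Then: (i) σ_{p,1} + σ_{p,2} = 1; (ii) σ_{p,1}^p + σ_{p,2}^p = 0; (iii) the argument of σ_{p,1} equals π/(2p), and in particular σ_{p,1} and σ_{p,2} have positive real part 1/2. -/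
open scoped ComplexConjugate

/-- **Properties of the two-term composition coefficients** `σ_{p,1} =
1/2 + i·sin(π/p)/(2 + 2cos(π/p))`, `σ_{p,2} = conj σ_{p,1}` for `p ≥ 2`:
they sum to `1`, satisfy `σ_{p,1}^p + σ_{p,2}^p = 0`, `arg σ_{p,1} = π/(2p)`,
and both have positive real part equal to `1/2`. -/
theorem composition_coefficients_properties (p : ℕ) (hp : 2 ≤ p)
    (σ₁ σ₂ : ℂ)
    (hσ₁ : σ₁ = 1 / 2 + Complex.I *
      ((Real.sin (Real.pi / p) / (2 + 2 * Real.cos (Real.pi / p)) : ℝ) : ℂ))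
    (hσ₂ : σ₂ = conj σ₁) :
    σ₁ + σ₂ = 1 ∧ σ₁ ^ p + σ₂ ^ p = 0 ∧
      σ₁.arg = Real.pi / (2 * p) ∧
      σ₁.re = 1 / 2 ∧ σ₂.re = 1 / 2 ∧ 0 < σ₁.re ∧ 0 < σ₂.re := by
  have hp2 : (2:ℝ) ≤ (p:ℝ) := by exact_mod_cast hp
  have hppos : (0:ℝ) < (p:ℝ) := by linarith
  have hpi := Real.pi_pos
  set θ := Real.pi / (p:ℝ) with hθdef
  have hθpos : 0 < θ := div_pos hpi hppos
  have hθle : θ ≤ Real.pi / 2 := by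
    rw [hθdef, div_le_div_iff₀ hppos two_pos]
    nlinarith
  have hc : 0 < Real.cos (θ/2) :=
    Real.cos_pos_of_mem_Ioo ⟨by linarith, by linarith⟩
  have hc' : Real.cos (θ/2) ≠ 0 := ne_of_gt hc
  have h2 : 2 * (θ/2) = θ := by ring
  have hsin : Real.sin θ = 2 * Real.sin (θ/2) * Real.cos (θ/2) := by
    have := Real.sin_two_mul (θ/2); rw [h2] at this; exact this
  have hcos : 2 + 2 * Real.cos θ = 4 * Real.cos (θ/2) ^ 2 := by
    have := Real.cos_sq (θ/2); rw [h2] at this; linarith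
  have hratio : Real.sin θ / (2 + 2 * Real.cos θ)
      = Real.sin (θ/2) / (2 * Real.cos (θ/2)) := by
    rw [hsin, hcos]
    field_simp
    ring
  set r : ℝ := 1 / (2 * Real.cos (θ/2)) with hrdef
  have hrpos : 0 < r := by positivity
  have h1 : r * Real.cos (θ/2) = 1/2 := by rw [hrdef]; field_simp
  have h2' : r * Real.sin (θ/2) = Real.sin θ / (2 + 2 * Real.cos θ) := by
    rw [hratio, hrdef]; field_simp
  have hσ : σ₁ = (r : ℂ) * Complex.exp ((θ/2 : ℝ) * Complex.I) := by
    have h1C : ((1:ℂ)/2) = (r:ℂ) * ((Real.cos (θ/2) : ℝ) : ℂ) := by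
      rw [← Complex.ofReal_mul, h1]; norm_num
    rw [hσ₁, Complex.exp_mul_I, ← Complex.ofReal_cos, ← Complex.ofReal_sin,
      ← h2', h1C]
    push_cast
    ring
  -- real parts
  have hre : σ₁.re = 1/2 := by
    rw [hσ₁]
    simp only [Complex.add_re, Complex.mul_re, Complex.I_re, Complex.I_im,
      Complex.ofReal_re, Complex.ofReal_im]
    norm_num
  have hre₂ : σ₂.re = 1/2 := by
    simp [hσ₂, Complex.conj_re, hre]
  -- sum
  have hsum : σ₁ + σ₂ = 1 := by
    rw [hσ₂, Complex.add_conj, hre]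
    norm_num
  -- arg
  have harg : σ₁.arg = Real.pi / (2 * p) := by
    rw [hσ, Complex.exp_mul_I, Complex.arg_real_mul _ hrpos,
      Complex.arg_cos_add_sin_mul_I ⟨by linarith, by linarith⟩]
    rw [hθdef, div_div, mul_comm]
  -- powers
  have hpow : σ₁ ^ p = (r:ℂ) ^ p * Complex.I := by
    rw [hσ, mul_pow, ← Complex.exp_nat_mul]
    have : (p : ℂ) * ((θ/2 : ℝ) * Complex.I) = (Real.pi / 2 : ℝ) * Complex.I := by
      push_cast [hθdef]
      have hpC : (p : ℂ) ≠ 0 := by exact_mod_cast hppos.ne'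
      field_simp
    rw [this, Complex.exp_mul_I, ← Complex.ofReal_cos, ← Complex.ofReal_sin,
      Real.cos_pi_div_two, Real.sin_pi_div_two]
    push_cast
    ring
  have hpow₂ : σ₂ ^ p = conj (σ₁ ^ p) := by
    rw [hσ₂, ← map_pow]
  have hsumpow : σ₁ ^ p + σ₂ ^ p = 0 := by
    rw [hpow₂, hpow]
    simp [map_mul, Complex.conj_I]
  exact ⟨hsum, hsumpow, harg, hre, hre₂, by rw [hre]; norm_num, by rw [hre₂]; norm_num⟩
end

section
/- Let a_1 = (1/4 − 1/(4√3)) + i·(1/4 + 1/(4√3)), a_2 = (1/4 + 1/(4√3)) + i·(−1/4 + 1/(4√3)), a_3 = (1/4 + 1/(4√3)) + i·(1/4 − 1/(4√3)), a_4 = (1/4 − 1/(4√3)) + i·(−1/4 − 1/(4√3)) be the stage coefficients of the CLT3 method. Then: (i) Re(a_k) > 0 for k = 1, 2, 3, 4; (ii) a_1 + a_2 + a_3 + a_4 = 1; (iii) Σ_{k=2}^{4} a_k·(Σ_{j=1}^{k−1} a_j) = 1/2. Hence the four-stage N-split method whose coefficients equal a_k in every operator satisfies the first- and second-order order conditions and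 has coefficients with positive real parts. -/
/-- **The CLT3 stage coefficients have positive real parts and satisfy the
first- and second-order order conditions**: `Re a_k > 0` for `k = 1,…,4`,
`a₁ + a₂ + a₃ + a₄ = 1`, and `∑_{k=2}^{4} a_k (∑_{j=1}^{k−1} a_j) = 1/2`. -/
theorem CLT3_coefficients_order_conditions (a₁ a₂ a₃ a₄ : ℂ)
    (ha₁ : a₁ = ((1 / 4 - 1 / (4 * Real.sqrt 3) : ℝ) : ℂ) +
      Complex.I * ((1 / 4 + 1 / (4 * Real.sqrt 3) : ℝ) : ℂ))
    (ha₂ : a₂ = ((1 / 4 + 1 / (4 * Real.sqrt 3) : ℝ) : ℂ) +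
      Complex.I * ((-(1 / 4) + 1 / (4 * Real.sqrt 3) : ℝ) : ℂ))
    (ha₃ : a₃ = ((1 / 4 + 1 / (4 * Real.sqrt 3) : ℝ) : ℂ) +
      Complex.I * ((1 / 4 - 1 / (4 * Real.sqrt 3) : ℝ) : ℂ))
    (ha₄ : a₄ = ((1 / 4 - 1 / (4 * Real.sqrt 3) : ℝ) : ℂ) +
      Complex.I * ((-(1 / 4) - 1 / (4 * Real.sqrt 3) : ℝ) : ℂ)) :
    (0 < a₁.re ∧ 0 < a₂.re ∧ 0 < a₃.re ∧ 0 < a₄.re) ∧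
      a₁ + a₂ + a₃ + a₄ = 1 ∧
      a₂ * a₁ + a₃ * (a₁ + a₂) + a₄ * (a₁ + a₂ + a₃) = 1 / 2 := by
  have hs1 : (1:ℝ) < Real.sqrt 3 := by
    have := Real.lt_sqrt (x := 1) (y := 3) (by norm_num)
    rw [this]; norm_num
  have hs0 : (0:ℝ) < Real.sqrt 3 := lt_trans one_pos hs1
  have hsne : Real.sqrt 3 ≠ 0 := ne_of_gt hs0
  have hs2 : Real.sqrt 3 * Real.sqrt 3 = 3 :=
    Real.mul_self_sqrt (by norm_num)
  have hinv : 1 / (4 * Real.sqrt 3) < 1 / 4 := by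
    apply div_lt_div_of_pos_left one_pos (by norm_num)
    nlinarith
  have hinvpos : 0 < 1 / (4 * Real.sqrt 3) := by positivity
  subst ha₁ ha₂ ha₃ ha₄
  refine ⟨⟨?_, ?_, ?_, ?_⟩, ?_, ?_⟩
  · simp [Complex.add_re, Complex.mul_re]; nlinarith
  · simp [Complex.add_re, Complex.mul_re]; nlinarith
  · simp [Complex.add_re, Complex.mul_re]; nlinarith
  · simp [Complex.add_re, Complex.mul_re]; nlinarith
  · push_cast
    ring_nf
  · push_cast
    ring_nf
    rw [Complex.ext_iff]
    constructor <;> simp [Complex.div_re, Complex.div_im, Complex.normSq] <;>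
      field_simp <;> nlinarith [hs2]
end

section
/- Let A be a complex unital Banach algebra, let N ≥ 1, and let X_1, …, X_N ∈ A. Let σ_{3,1} = 1/2 + i·√3/6 and σ_{3,2} = 1/2 − i·√3/6. For σ ∈ ℂ define the scaled Strang product S(σ, t) := exp((σt/2)X_1) ⋯ exp((σt/2)X_{N−1}) · exp(σt X_N) · exp((σt/2)X_{N−1}) ⋯ exp((σt/2)X_1). Define the complex Strang composition P(t) := S(σ_{3,1}, t) · S(σ_{3,2}, t). Then, as real t → 0, ‖P(t) − exp(t·(X_1 + ⋯ + X_N))‖ = O(|t|⁴); that is, the third-order complex method C-Strang-3 obtained from the two-term composition of the N-split Strang method is third-order accurate for every N. -/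
open scoped BigOperators
open Filter Asymptotics NormedSpace Topology
set_option linter.unusedSectionVars false

namespace CStrangAux

variable {A : Type*} [NormedRing A] [NormedAlgebra ℂ A] [CompleteSpace A]

/-- Degree-3 polynomial with coefficients in `A`. -/
noncomputable def P4 (a₀ a₁ a₂ a₃ : A) (u : ℂ) : A :=
  a₀ + u • a₁ + u ^ 2 • a₂ + u ^ 3 • a₃

/-- `f` has the expansion `a₀ + u•a₁ + u²•a₂ + u³•a₃ + O(u⁴)` at `0`. -/
def HasE (f : ℂ → A) (a₀ a₁ a₂ a₃ : A) : Prop :=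
  (fun u => f u - P4 a₀ a₁ a₂ a₃ u) =O[𝓝 (0:ℂ)] fun u => ‖u‖ ^ 4

lemma continuous_P4 (a₀ a₁ a₂ a₃ : A) : Continuous (P4 a₀ a₁ a₂ a₃) := by
  unfold P4; fun_prop

lemma HasE.isBigO_one {f : ℂ → A} {a₀ a₁ a₂ a₃ : A} (h : HasE f a₀ a₁ a₂ a₃) :
    f =O[𝓝 (0:ℂ)] (fun _ => (1:ℝ)) := by
  have h1 : (fun u : ℂ => ‖u‖ ^ 4) =O[𝓝 (0:ℂ)] (fun _ => (1:ℝ)) := by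
    have hc : Continuous (fun u : ℂ => ‖u‖ ^ 4) := by continuity
    exact (hc.tendsto 0).isBigO_one ℝ
  have h2 : (fun u => P4 a₀ a₁ a₂ a₃ u) =O[𝓝 (0:ℂ)] (fun _ => (1:ℝ)) :=
    ((continuous_P4 a₀ a₁ a₂ a₃).tendsto 0).isBigO_one ℝ
  have := (h.trans h1).add h2
  simpa using this

lemma HasE_exp (Y : A) :
    HasE (fun u : ℂ => exp (u • Y)) 1 Y ((2:ℂ)⁻¹ • (Y * Y)) ((6:ℂ)⁻¹ • (Y * (Y * Y))) := by
  classical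
  set F : ℕ → A := fun n => ((Nat.factorial n : ℂ))⁻¹ • Y ^ n with hF
  have hsum : ∀ u : ℂ, Summable fun n => u ^ n • F n := by
    intro u
    have := expSeries_summable' (𝕂 := ℂ) (u • Y)
    refine this.congr fun n => ?_
    rw [hF, smul_pow, smul_comm]
  have hexp : ∀ u : ℂ, exp (u • Y) = ∑' n, u ^ n • F n := by
    intro u
    rw [exp_eq_tsum ℂ]
    refine tsum_congr fun n => ?_
    rw [hF, smul_pow, smul_comm]
  have hnormF : Summable fun n => ‖F (n + 4)‖ := by
    have : Summable fun n => ‖F n‖ := by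
      have := norm_expSeries_summable' (𝕂 := ℂ) Y
      exact this.congr fun n => rfl
    exact this.comp_injective (add_left_injective 4)
  set C : ℝ := ∑' n, ‖F (n + 4)‖ with hC
  rw [HasE]
  rw [isBigO_iff]
  refine ⟨C, ?_⟩
  have hball : ∀ᶠ u : ℂ in 𝓝 0, ‖u‖ ≤ 1 := by
    have : Metric.closedBall (0:ℂ) 1 ∈ 𝓝 (0:ℂ) := Metric.closedBall_mem_nhds _ one_pos
    filter_upwards [this] with u hu
    simpa [Metric.mem_closedBall] using hu
  filter_upwards [hball] with u hu
  have hsplit : exp (u • Y) - P4 1 Y ((2:ℂ)⁻¹ • (Y * Y)) ((6:ℂ)⁻¹ • (Y * (Y * Y))) u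
      = ∑' n, u ^ (n + 4) • F (n + 4) := by
    have h4 := (Summable.sum_add_tsum_nat_add (f := fun n => u ^ n • F n) 4 (hsum u)).symm
    have hP : (∑ i ∈ Finset.range 4, u ^ i • F i)
        = P4 1 Y ((2:ℂ)⁻¹ • (Y * Y)) ((6:ℂ)⁻¹ • (Y * (Y * Y))) u := by
      rw [Finset.sum_range_succ, Finset.sum_range_succ, Finset.sum_range_succ,
        Finset.sum_range_one]
      simp only [hF, P4]
      norm_num [Nat.factorial, pow_succ, smul_smul, mul_comm, mul_assoc]
    rw [hexp u, h4, hP]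
    abel
  rw [hsplit]
  have hb : ∀ n : ℕ, ‖u ^ (n + 4) • F (n + 4)‖ ≤ ‖u‖ ^ 4 * ‖F (n + 4)‖ := by
    intro n
    rw [norm_smul, norm_pow]
    have : ‖u‖ ^ (n + 4) ≤ ‖u‖ ^ 4 := by
      calc ‖u‖ ^ (n + 4) = ‖u‖ ^ n * ‖u‖ ^ 4 := by ring
        _ ≤ 1 * ‖u‖ ^ 4 := by
            gcongr
            exact pow_le_one₀ (norm_nonneg u) hu
        _ = ‖u‖ ^ 4 := one_mul _
    exact mul_le_mul_of_nonneg_right this (norm_nonneg _)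
  calc ‖∑' n, u ^ (n + 4) • F (n + 4)‖ ≤ ∑' n, ‖u ^ (n + 4) • F (n + 4)‖ := by
        refine norm_tsum_le_tsum_norm ?_
        refine Summable.of_nonneg_of_le (fun n => norm_nonneg _) hb ?_
        exact hnormF.mul_left _
    _ ≤ ∑' n, ‖u‖ ^ 4 * ‖F (n + 4)‖ := by
        refine Summable.tsum_le_tsum hb ?_ (hnormF.mul_left _)
        refine Summable.of_nonneg_of_le (fun n => norm_nonneg _) hb (hnormF.mul_left _)
    _ = ‖u‖ ^ 4 * C := by rw [tsum_mul_left]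
    _ ≤ C * ‖‖u‖ ^ 4‖ := by
        rw [Real.norm_of_nonneg (by positivity)]; ring_nf; exact le_refl _


lemma HasE.comp_smul {f : ℂ → A} {a₀ a₁ a₂ a₃ : A} (h : HasE f a₀ a₁ a₂ a₃) (c : ℂ) :
    HasE (fun u => f (c * u)) a₀ (c • a₁) (c ^ 2 • a₂) (c ^ 3 • a₃) := by
  have htend : Tendsto (fun u : ℂ => c * u) (𝓝 0) (𝓝 0) := by
    have : Continuous (fun u : ℂ => c * u) := by continuity
    simpa using this.tendsto 0
  have h1 := h.comp_tendsto htend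
  have h2 : (fun u : ℂ => ‖c * u‖ ^ 4) =O[𝓝 (0:ℂ)] fun u => ‖u‖ ^ 4 := by
    refine IsBigO.of_bound (‖c‖ ^ 4) ?_
    filter_upwards with u
    rw [Real.norm_of_nonneg (by positivity), Real.norm_of_nonneg (by positivity),
      norm_mul, mul_pow]
  have h3 := h1.trans h2
  refine h3.congr_left fun u => ?_
  simp only [Function.comp, P4, mul_pow, smul_smul]
  ring_nf

lemma hasE_one : HasE (fun _ : ℂ => (1:A)) 1 0 0 0 := by
  have : (fun u : ℂ => (1:A) - P4 1 0 0 0 u) = fun _ => 0 := by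
    funext u; simp [P4]
  rw [HasE, this]
  exact isBigO_zero _ _

lemma norm_pow_isBigO_norm4 {k : ℕ} (hk : 4 ≤ k) :
    (fun u : ℂ => ‖u‖ ^ k) =O[𝓝 (0:ℂ)] fun u => ‖u‖ ^ 4 := by
  refine IsBigO.of_bound 1 ?_
  have hball : ∀ᶠ u : ℂ in 𝓝 0, ‖u‖ ≤ 1 := by
    have : Metric.closedBall (0:ℂ) 1 ∈ 𝓝 (0:ℂ) := Metric.closedBall_mem_nhds _ one_pos
    filter_upwards [this] with u hu
    simpa [Metric.mem_closedBall] using hu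
  filter_upwards [hball] with u hu
  rw [Real.norm_of_nonneg (by positivity), Real.norm_of_nonneg (by positivity), one_mul]
  exact pow_le_pow_of_le_one (norm_nonneg u) hu hk

lemma HasE.mul {f g : ℂ → A} {a₀ a₁ a₂ a₃ b₀ b₁ b₂ b₃ : A}
    (hf : HasE f a₀ a₁ a₂ a₃) (hg : HasE g b₀ b₁ b₂ b₃) :
    HasE (fun u => f u * g u) (a₀ * b₀) (a₀ * b₁ + a₁ * b₀)
      (a₀ * b₂ + a₁ * b₁ + a₂ * b₀) (a₀ * b₃ + a₁ * b₂ + a₂ * b₁ + a₃ * b₀) := by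
  have key : ∀ u : ℂ, f u * g u - P4 (a₀ * b₀) (a₀ * b₁ + a₁ * b₀)
      (a₀ * b₂ + a₁ * b₁ + a₂ * b₀) (a₀ * b₃ + a₁ * b₂ + a₂ * b₁ + a₃ * b₀) u
      = (f u - P4 a₀ a₁ a₂ a₃ u) * g u
        + P4 a₀ a₁ a₂ a₃ u * (g u - P4 b₀ b₁ b₂ b₃ u)
        + (u ^ 4 • ((a₁ * b₃ + a₂ * b₂ + a₃ * b₁)
            + u • (a₂ * b₃ + a₃ * b₂) + u ^ 2 • (a₃ * b₃))) := by
    intro u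
    have hpoly : P4 a₀ a₁ a₂ a₃ u * P4 b₀ b₁ b₂ b₃ u
        - P4 (a₀ * b₀) (a₀ * b₁ + a₁ * b₀) (a₀ * b₂ + a₁ * b₁ + a₂ * b₀)
            (a₀ * b₃ + a₁ * b₂ + a₂ * b₁ + a₃ * b₀) u
        = u ^ 4 • ((a₁ * b₃ + a₂ * b₂ + a₃ * b₁)
            + u • (a₂ * b₃ + a₃ * b₂) + u ^ 2 • (a₃ * b₃)) := by
      simp only [P4, mul_add, add_mul, smul_mul_assoc, mul_smul_comm, smul_smul, smul_add]
      module
    rw [sub_mul, mul_sub] at *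
    rw [← hpoly]
    abel
  have t1 : (fun u => (f u - P4 a₀ a₁ a₂ a₃ u) * g u) =O[𝓝 (0:ℂ)] fun u => ‖u‖ ^ 4 := by
    have := IsBigO.mul hf hg.isBigO_one
    simpa using this
  have t2 : (fun u => P4 a₀ a₁ a₂ a₃ u * (g u - P4 b₀ b₁ b₂ b₃ u))
      =O[𝓝 (0:ℂ)] fun u => ‖u‖ ^ 4 := by
    have hP : (fun u => P4 a₀ a₁ a₂ a₃ u) =O[𝓝 (0:ℂ)] (fun _ => (1:ℝ)) :=
      ((continuous_P4 a₀ a₁ a₂ a₃).tendsto 0).isBigO_one ℝ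
    have := hP.mul hg
    simpa using this
  have t3 : (fun u : ℂ => u ^ 4 • ((a₁ * b₃ + a₂ * b₂ + a₃ * b₁)
      + u • (a₂ * b₃ + a₃ * b₂) + u ^ 2 • (a₃ * b₃))) =O[𝓝 (0:ℂ)] fun u => ‖u‖ ^ 4 := by
    have h1 : (fun u : ℂ => u ^ 4) =O[𝓝 (0:ℂ)] fun u => ‖u‖ ^ 4 := by
      refine IsBigO.of_bound 1 ?_
      filter_upwards with u
      simp [norm_pow]
    have h2 : (fun u : ℂ => (a₁ * b₃ + a₂ * b₂ + a₃ * b₁)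
        + u • (a₂ * b₃ + a₃ * b₂) + u ^ 2 • (a₃ * b₃)) =O[𝓝 (0:ℂ)] (fun _ => (1:ℝ)) := by
      have hc : Continuous (fun u : ℂ => (a₁ * b₃ + a₂ * b₂ + a₃ * b₁)
          + u • (a₂ * b₃ + a₃ * b₂) + u ^ 2 • (a₃ * b₃)) := by fun_prop
      exact (hc.tendsto 0).isBigO_one ℝ
    have := h1.smul h2
    simpa using this
  have := (t1.add t2).add t3
  refine this.congr_left fun u => ?_
  rw [key u]

lemma HasE.sub_isBigO {f g : ℂ → A} {a₀ a₁ a₂ a₃ : A}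
    (hf : HasE f a₀ a₁ a₂ a₃) (hg : HasE g a₀ a₁ a₂ a₃) :
    (fun u => f u - g u) =O[𝓝 (0:ℂ)] fun u => ‖u‖ ^ 4 :=
  (hf.sub hg).congr_left fun u => sub_sub_sub_cancel_right _ _ _

lemma lim_zero {r : ℂ → A} {C : ℝ} {m k : ℕ} (hk : 1 ≤ k) (hcont : Continuous r)
    (hb : ∀ᶠ u : ℂ in 𝓝[≠] (0:ℂ), ‖u‖ ^ m * ‖r u‖ ≤ C * ‖u‖ ^ (m + k)) :
    r 0 = 0 := by
  have hb' : ∀ᶠ u : ℂ in 𝓝[≠] (0:ℂ), ‖r u‖ ≤ C * ‖u‖ ^ k := by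
    filter_upwards [hb, self_mem_nhdsWithin] with u hu hu0
    have hu0' : u ≠ 0 := hu0
    have hpos : (0:ℝ) < ‖u‖ ^ m :=
      pow_pos (norm_pos_iff.mpr hu0') m
    have hle : ‖u‖ ^ m * ‖r u‖ ≤ ‖u‖ ^ m * (C * ‖u‖ ^ k) := by
      calc ‖u‖ ^ m * ‖r u‖ ≤ C * ‖u‖ ^ (m + k) := hu
        _ = ‖u‖ ^ m * (C * ‖u‖ ^ k) := by ring
    exact le_of_mul_le_mul_left hle hpos
  have h2 : Tendsto r (𝓝[≠] (0:ℂ)) (𝓝 0) := by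
    refine squeeze_zero_norm' hb' ?_
    have : Tendsto (fun u : ℂ => C * ‖u‖ ^ k) (𝓝 0) (𝓝 (C * ‖(0:ℂ)‖ ^ k)) := by
      exact (continuous_const.mul ((continuous_norm).pow k)).tendsto 0
    have h0 : C * ‖(0:ℂ)‖ ^ k = 0 := by
      simp [zero_pow (by omega : k ≠ 0)]
    exact (h0 ▸ this).mono_left nhdsWithin_le_nhds
  have h1 : Tendsto r (𝓝[≠] (0:ℂ)) (𝓝 (r 0)) :=
    (hcont.tendsto 0).mono_left nhdsWithin_le_nhds
  exact tendsto_nhds_unique h1 h2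

lemma coeffs_zero {d₀ d₁ d₂ d₃ : A}
    (h : (fun u : ℂ => P4 d₀ d₁ d₂ d₃ u) =O[𝓝 (0:ℂ)] fun u => ‖u‖ ^ 4) :
    d₀ = 0 ∧ d₁ = 0 ∧ d₂ = 0 := by
  obtain ⟨C, hC⟩ := h.bound
  have hC' : ∀ᶠ u : ℂ in 𝓝 (0:ℂ), ‖P4 d₀ d₁ d₂ d₃ u‖ ≤ C * ‖u‖ ^ 4 := by
    filter_upwards [hC] with u hu
    simpa [Real.norm_of_nonneg (pow_nonneg (norm_nonneg u) 4)] using hu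
  have h0 : d₀ = 0 := by
    have := hC'.self_of_nhds
    simpa [P4] using this
  subst h0
  have h1 : d₁ = 0 := by
    have := lim_zero (r := fun u : ℂ => d₁ + u • d₂ + u ^ 2 • d₃) (C := C)
      (m := 1) (k := 3) (by norm_num) (by fun_prop) ?_
    · simpa using this
    · filter_upwards [nhdsWithin_le_nhds hC'] with u hu
      have heq : ‖u‖ ^ 1 * ‖d₁ + u • d₂ + u ^ 2 • d₃‖
          = ‖P4 0 d₁ d₂ d₃ u‖ := by
        rw [pow_one, ← norm_smul]
        congr 1
        simp only [P4]
        module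
      rw [heq]
      simpa using hu
  subst h1
  have h2 : d₂ = 0 := by
    have := lim_zero (r := fun u : ℂ => d₂ + u • d₃) (C := C)
      (m := 2) (k := 2) (by norm_num) (by fun_prop) ?_
    · simpa using this
    · filter_upwards [nhdsWithin_le_nhds hC'] with u hu
      have heq : ‖u‖ ^ 2 * ‖d₂ + u • d₃‖ = ‖P4 0 0 d₂ d₃ u‖ := by
        rw [← norm_pow, ← norm_smul]
        congr 1
        simp only [P4]
        module
      rw [heq]
      simpa using hu
  exact ⟨rfl, rfl, h2⟩

lemma prod_rev_cancel {B : Type*} {M : Type*} [Monoid M] (l : List B) (f g : B → M)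
    (h : ∀ b ∈ l, f b * g b = 1) :
    (l.map f).prod * ((l.map g).reverse).prod = 1 := by
  induction l with
  | nil => simp
  | cons b t ih =>
    simp only [List.map_cons, List.reverse_cons, List.prod_cons, List.prod_append,
      List.prod_cons, List.prod_nil, mul_one]
    have ht : ∀ b ∈ t, f b * g b = 1 := fun x hx => h x (List.mem_cons_of_mem _ hx)
    calc f b * (t.map f).prod * (((t.map g).reverse).prod * g b)
        = f b * ((t.map f).prod * ((t.map g).reverse).prod) * g b := by
          rw [mul_assoc, mul_assoc, mul_assoc]
      _ = f b * g b := by rw [ih ht, mul_one]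
      _ = 1 := h b (List.mem_cons_self)

lemma rev_prod_cancel {B : Type*} {M : Type*} [Monoid M] (l : List B) (f g : B → M)
    (h : ∀ b ∈ l, f b * g b = 1) :
    ((l.map f).reverse).prod * (l.map g).prod = 1 := by
  induction l with
  | nil => simp
  | cons b t ih =>
    simp only [List.map_cons, List.reverse_cons, List.prod_cons, List.prod_append,
      List.prod_nil, mul_one]
    have ht : ∀ b ∈ t, f b * g b = 1 := fun x hx => h x (List.mem_cons_of_mem _ hx)
    calc ((t.map f).reverse).prod * f b * (g b * (t.map g).prod)
        = ((t.map f).reverse).prod * (f b * g b) * (t.map g).prod := by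
          rw [mul_assoc, mul_assoc, mul_assoc]
      _ = ((t.map f).reverse).prod * (t.map g).prod := by
          rw [h b (List.mem_cons_self), mul_one]
      _ = 1 := ih ht

lemma hasE_list_prod {B : Type*} (l : List B) (f : B → ℂ → A) (a : B → A)
    (h : ∀ b ∈ l, ∃ a₂ a₃ : A, HasE (f b) 1 (a b) a₂ a₃) :
    ∃ a₂ a₃ : A, HasE (fun u => (l.map (fun b => f b u)).prod) 1 ((l.map a).sum) a₂ a₃ := by
  induction l with
  | nil =>
    refine ⟨0, 0, ?_⟩
    simpa using hasE_one (A := A)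
  | cons b t ih =>
    obtain ⟨a₂, a₃, hb⟩ := h b (List.mem_cons_self)
    obtain ⟨c₂, c₃, ht⟩ := ih (fun x hx => h x (List.mem_cons_of_mem _ hx))
    have := hb.mul ht
    simp only [one_mul, mul_one] at this
    rw [add_comm ((t.map a).sum) (a b)] at this
    refine ⟨c₂ + a b * (t.map a).sum + a₂, c₃ + a b * c₂ + a₂ * (t.map a).sum + a₃, ?_⟩
    simp only [List.map_cons, List.prod_cons, List.sum_cons]
    exact this

lemma HasE.congr_fun {f g : ℂ → A} {a₀ a₁ a₂ a₃ : A} (h : HasE f a₀ a₁ a₂ a₃)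
    (heq : ∀ u, f u = g u) : HasE g a₀ a₁ a₂ a₃ := by
  rw [HasE] at h ⊢
  refine h.congr_left fun u => ?_
  rw [heq u]

lemma P4_sub (a₀ a₁ a₂ a₃ b₀ b₁ b₂ b₃ : A) (u : ℂ) :
    P4 a₀ a₁ a₂ a₃ u - P4 b₀ b₁ b₂ b₃ u
      = P4 (a₀ - b₀) (a₁ - b₁) (a₂ - b₂) (a₃ - b₃) u := by
  simp only [P4, smul_sub]
  abel

lemma hasE_unique {f : ℂ → A} {a₀ a₁ a₂ a₃ b₀ b₁ b₂ b₃ : A}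
    (hf : HasE f a₀ a₁ a₂ a₃) (hg : HasE f b₀ b₁ b₂ b₃) :
    a₀ = b₀ ∧ a₁ = b₁ ∧ a₂ = b₂ := by
  have h : (fun u : ℂ => P4 (b₀ - a₀) (b₁ - a₁) (b₂ - a₂) (b₃ - a₃) u)
      =O[𝓝 (0:ℂ)] fun u => ‖u‖ ^ 4 := by
    have := hf.sub hg
    refine this.congr_left fun u => ?_
    rw [← P4_sub]
    abel
  obtain ⟨h0, h1, h2⟩ := coeffs_zero h
  exact ⟨(sub_eq_zero.mp h0).symm, (sub_eq_zero.mp h1).symm, (sub_eq_zero.mp h2).symm⟩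

/-- The Strang splitting product. -/
noncomputable def Tfun (l : List A) (Z : A) (u : ℂ) : A :=
  (l.map (fun Y => exp ((2⁻¹ * u) • Y))).prod * exp (u • Z) *
    ((l.map (fun Y => exp ((2⁻¹ * u) • Y))).reverse).prod

lemma Tfun_palindrome (l : List A) (Z : A) (u : ℂ) :
    Tfun l Z u * Tfun l Z (-u) = 1 := by
  letI : NormedAlgebra ℚ A := .restrictScalars ℚ ℂ A
  have hfg : ∀ Y ∈ l, exp ((2⁻¹ * u) • Y) * exp ((2⁻¹ * -u) • Y) = 1 := by
    intro Y _
    rw [← exp_add_of_commute (((Commute.refl Y).smul_left _).smul_right _)]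
    rw [show (2⁻¹ * u) • Y + (2⁻¹ * -u) • Y = (0:ℂ) • Y by rw [← add_smul]; ring_nf]
    rw [zero_smul, exp_zero]
  have h1 : ((l.map (fun Y => exp ((2⁻¹ * u) • Y))).reverse).prod *
      (l.map (fun Y => exp ((2⁻¹ * -u) • Y))).prod = 1 :=
    rev_prod_cancel l _ _ hfg
  have h2 : exp (u • Z) * exp ((-u) • Z) = 1 := by
    rw [← exp_add_of_commute (((Commute.refl Z).smul_left _).smul_right _)]
    rw [show u • Z + (-u) • Z = (0:ℂ) • Z by rw [← add_smul]; ring_nf]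
    rw [zero_smul, exp_zero]
  have h3 : (l.map (fun Y => exp ((2⁻¹ * u) • Y))).prod *
      ((l.map (fun Y => exp ((2⁻¹ * -u) • Y))).reverse).prod = 1 :=
    prod_rev_cancel l _ _ hfg
  set p1 := (l.map (fun Y => exp ((2⁻¹ * u) • Y))).prod
  set e1 := exp (u • Z)
  set r1 := ((l.map (fun Y => exp ((2⁻¹ * u) • Y))).reverse).prod
  set p2 := (l.map (fun Y => exp ((2⁻¹ * -u) • Y))).prod
  set e2 := exp ((-u) • Z)
  set r2 := ((l.map (fun Y => exp ((2⁻¹ * -u) • Y))).reverse).prod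
  show p1 * e1 * r1 * (p2 * e2 * r2) = 1
  calc p1 * e1 * r1 * (p2 * e2 * r2)
      = p1 * (e1 * ((r1 * p2) * (e2 * r2))) := by simp only [mul_assoc]
    _ = p1 * (e1 * (e2 * r2)) := by rw [h1, one_mul]
    _ = p1 * ((e1 * e2) * r2) := by rw [mul_assoc]
    _ = p1 * r2 := by rw [h2, one_mul]
    _ = 1 := h3

lemma hasE_Tfun (l : List A) (Z : A) :
    ∃ a₃ : A, HasE (Tfun l Z) 1 (l.sum + Z)
      ((2:ℂ)⁻¹ • ((l.sum + Z) * (l.sum + Z))) a₃ := by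
  classical
  set W : List (ℂ × A) := (l.map fun Y => ((2:ℂ)⁻¹, Y)) ++ [((1:ℂ), Z)] ++
    (l.map fun Y => ((2:ℂ)⁻¹, Y)).reverse with hW
  have hfac : ∀ p ∈ W, ∃ a₂ a₃ : A,
      HasE (fun u => exp ((p.1 * u) • p.2)) 1 (p.1 • p.2) a₂ a₃ := by
    intro p _
    refine ⟨_, _, (HasE_exp p.2).comp_smul p.1⟩
  obtain ⟨a₂, a₃, hprod⟩ := hasE_list_prod W (fun p u => exp ((p.1 * u) • p.2))
    (fun p => p.1 • p.2) hfac
  -- identify the function with Tfun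
  have hfun : ∀ u : ℂ, (W.map (fun p => exp ((p.1 * u) • p.2))).prod = Tfun l Z u := by
    intro u
    rw [hW]
    simp only [List.map_append, List.prod_append, List.map_map, List.map_reverse,
      List.map_cons, List.map_nil, List.prod_cons, List.prod_nil, mul_one]
    rw [Tfun]
    congr 1
    · congr 1
      rw [one_mul]
  -- identify the first-order coefficient
  have hsum : (W.map (fun p : ℂ × A => p.1 • p.2)).sum = l.sum + Z := by
    rw [hW]
    simp only [List.map_append, List.sum_append, List.map_map, List.map_reverse,
      List.sum_reverse, List.map_cons, List.map_nil, List.sum_cons, List.sum_nil,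
      add_zero, one_smul]
    have hcomp : ((fun p : ℂ × A => p.1 • p.2) ∘ fun Y : A => ((2:ℂ)⁻¹, Y))
        = ((2:ℂ)⁻¹ • ·) := rfl
    rw [hcomp, ← List.smul_sum]
    rw [add_assoc, add_comm Z, ← add_assoc, ← add_smul]
    norm_num
  rw [hsum] at hprod
  have hT : HasE (Tfun l Z) 1 (l.sum + Z) a₂ a₃ := hprod.congr_fun hfun
  -- palindrome argument to pin down a₂
  set Sg := l.sum + Z with hSg
  have hTneg : HasE (fun u => Tfun l Z (-u)) 1 (-Sg) a₂ (-a₃) := by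
    have := hT.comp_smul (-1)
    have h2 := this.congr_fun (g := fun u => Tfun l Z (-u)) fun u => by rw [neg_one_mul]
    simpa [pow_succ, neg_one_smul] using h2
  have hmul := hT.mul hTneg
  have hone : HasE (fun u : ℂ => Tfun l Z u * Tfun l Z (-u)) 1 0 0 0 :=
    hasE_one.congr_fun fun u => (Tfun_palindrome l Z u).symm
  obtain ⟨-, -, h2⟩ := hasE_unique hmul hone
  have ha₂ : a₂ = (2:ℂ)⁻¹ • (Sg * Sg) := by
    have h2' : a₂ + a₂ = Sg * Sg := by
      rw [one_mul, mul_one] at h2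
      have := h2
      -- h2 : a₂ + Sg * -Sg + a₂ = 0
      have hx : a₂ + a₂ = -(Sg * -Sg) := by
        rw [← sub_eq_zero]
        rw [← this]
        abel
      rw [hx, mul_neg, neg_neg]
    calc a₂ = (2:ℂ)⁻¹ • (a₂ + a₂) := by
          rw [← two_smul ℂ a₂, smul_smul]
          norm_num
      _ = (2:ℂ)⁻¹ • (Sg * Sg) := by rw [h2']
  rw [ha₂] at hT
  exact ⟨a₃, hT⟩

lemma main_core (l : List A) (Z : A) :
    (fun u : ℂ =>
        Tfun l Z ((1 / 2 + Complex.I * ((Real.sqrt 3 : ℝ) : ℂ) / 6) * u) *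
          Tfun l Z ((1 / 2 - Complex.I * ((Real.sqrt 3 : ℝ) : ℂ) / 6) * u) -
          exp (u • (l.sum + Z)))
      =O[𝓝 (0:ℂ)] fun u => ‖u‖ ^ 4 := by
  obtain ⟨a₃, hT⟩ := hasE_Tfun l Z
  set Sg := l.sum + Z with hSg
  have hs : ((Real.sqrt 3 : ℝ) : ℂ) ^ 2 = 3 := by
    rw [← Complex.ofReal_pow, Real.sq_sqrt (by norm_num : (0:ℝ) ≤ 3)]
    norm_num
  have hG := (hT.comp_smul (1 / 2 + Complex.I * ((Real.sqrt 3 : ℝ) : ℂ) / 6)).mul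
    (hT.comp_smul (1 / 2 - Complex.I * ((Real.sqrt 3 : ℝ) : ℂ) / 6))
  have hexp := HasE_exp Sg
  set σ₁ : ℂ := 1 / 2 + Complex.I * ((Real.sqrt 3 : ℝ) : ℂ) / 6 with hσ₁
  set σ₂ : ℂ := 1 / 2 - Complex.I * ((Real.sqrt 3 : ℝ) : ℂ) / 6 with hσ₂
  have e0 : (1:A) * 1 = 1 := one_mul 1
  have e1 : (1:A) * σ₂ • Sg + σ₁ • Sg * 1 = Sg := by
    simp only [one_mul, mul_one, ← add_smul]
    rw [show σ₂ + σ₁ = 1 by rw [hσ₁, hσ₂]; ring, one_smul]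
  have e2 : (1:A) * σ₂ ^ 2 • (2:ℂ)⁻¹ • (Sg * Sg) + σ₁ • Sg * σ₂ • Sg
      + σ₁ ^ 2 • (2:ℂ)⁻¹ • (Sg * Sg) * 1 = (2:ℂ)⁻¹ • (Sg * Sg) := by
    simp only [one_mul, mul_one, smul_mul_smul_comm, smul_smul]
    match_scalars
    rw [hσ₁, hσ₂]
    ring1
  have e3 : (1:A) * σ₂ ^ 3 • a₃ + σ₁ • Sg * σ₂ ^ 2 • (2:ℂ)⁻¹ • (Sg * Sg)
      + σ₁ ^ 2 • (2:ℂ)⁻¹ • (Sg * Sg) * σ₂ • Sg + σ₁ ^ 3 • a₃ * 1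
      = (6:ℂ)⁻¹ • (Sg * (Sg * Sg)) := by
    simp only [one_mul, mul_one, smul_mul_smul_comm, smul_smul, smul_mul_assoc,
      mul_smul_comm, mul_assoc]
    match_scalars
    all_goals rw [hσ₁, hσ₂]
    all_goals first
      | linear_combination (-(((Real.sqrt 3 : ℝ) : ℂ) ^ 2) / 72) * Complex.I_sq
          + (1 / 72) * hs
      | linear_combination (((Real.sqrt 3 : ℝ) : ℂ) ^ 2 / 12) * Complex.I_sq
          - (1 / 12) * hs
  rw [e0, e1, e2, e3] at hG
  exact hG.sub_isBigO hexp

lemma list_range_map_sum {M : Type*} [AddCommMonoid M] (n : ℕ) (f : ℕ → M) :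
    ((List.range n).map f).sum = ∑ i ∈ Finset.range n, f i := by
  induction n with
  | zero => simp
  | succ n ih => rw [List.range_succ, List.map_append, List.sum_append,
      Finset.sum_range_succ, ih]; simp

lemma sum_range_succ_eq_Icc {M : Type*} [AddCommMonoid M] (f : ℕ → M) (n : ℕ) :
    ∑ i ∈ Finset.range n, f (i + 1) = ∑ ℓ ∈ Finset.Icc 1 n, f ℓ := by
  induction n with
  | zero => simp
  | succ n ih =>
    rw [Finset.sum_range_succ, ih, Finset.sum_Icc_succ_top (by omega : 1 ≤ n + 1)]

end CStrangAux

open CStrangAux in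
/-- **The C-Strang-3 method is third-order accurate for every `N`.**
With `σ_{3,1} = 1/2 + i√3/6`, `σ_{3,2} = 1/2 − i√3/6` and the scaled Strang
product `S(σ,t) = exp((σt/2)X₁)⋯exp((σt/2)X_{N−1})·exp(σtX_N)·
exp((σt/2)X_{N−1})⋯exp((σt/2)X₁)`, the composition `P(t) = S(σ_{3,1},t)·S(σ_{3,2},t)`
satisfies `‖P(t) − exp(t(X₁ + ⋯ + X_N))‖ = O(|t|⁴)` as real `t → 0`. -/
theorem CStrang3_third_order {A : Type*} [NormedRing A] [NormedAlgebra ℂ A]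
    [CompleteSpace A] (N : ℕ) (hN : 1 ≤ N) (X : ℕ → A)
    (S : ℂ → ℝ → A)
    (hS : ∀ (σ : ℂ) (t : ℝ),
      S σ t = ((List.range (N - 1)).map (fun ℓ =>
          NormedSpace.exp ((σ * (t : ℂ) / 2) • X (ℓ + 1)))).prod *
        NormedSpace.exp ((σ * (t : ℂ)) • X N) *
        (((List.range (N - 1)).map (fun ℓ =>
          NormedSpace.exp ((σ * (t : ℂ) / 2) • X (ℓ + 1)))).reverse).prod) :
    (fun t : ℝ =>
        S (1 / 2 + Complex.I * ((Real.sqrt 3 : ℝ) : ℂ) / 6) t *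
          S (1 / 2 - Complex.I * ((Real.sqrt 3 : ℝ) : ℂ) / 6) t -
          NormedSpace.exp ((t : ℂ) • ∑ ℓ ∈ Finset.Icc 1 N, X ℓ))
      =O[nhds (0 : ℝ)] fun t : ℝ => |t| ^ 4 := by
  classical
  set l : List A := (List.range (N - 1)).map (fun ℓ => X (ℓ + 1)) with hl
  set Z : A := X N with hZ
  have hsum : l.sum + Z = ∑ ℓ ∈ Finset.Icc 1 N, X ℓ := by
    rw [hl, hZ, list_range_map_sum, ← sum_range_succ_eq_Icc X N]
    rw [show N = (N - 1) + 1 by omega, Finset.sum_range_succ]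
    congr 2 <;> omega
  have hSfun : ∀ (σ : ℂ) (t : ℝ), S σ t = Tfun l Z (σ * (t : ℂ)) := by
    intro σ t
    rw [hS σ t, Tfun]
    have hmap : (List.range (N - 1)).map (fun ℓ =>
        NormedSpace.exp ((σ * (t : ℂ) / 2) • X (ℓ + 1)))
        = l.map (fun Y => NormedSpace.exp ((2⁻¹ * (σ * (t : ℂ))) • Y)) := by
      rw [hl, List.map_map]
      congr 1
      funext ℓ
      simp only [Function.comp]
      rw [show σ * (t : ℂ) / 2 = 2⁻¹ * (σ * (t : ℂ)) by ring]
    rw [hmap, hZ]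
  have hof : Filter.Tendsto (fun t : ℝ => (t : ℂ)) (𝓝 0) (𝓝 0) := by
    have := Complex.continuous_ofReal.tendsto 0
    simpa using this
  have hfinal := (main_core l Z).comp_tendsto hof
  have hleft : ∀ t : ℝ,
      ((fun u : ℂ =>
        Tfun l Z ((1 / 2 + Complex.I * ((Real.sqrt 3 : ℝ) : ℂ) / 6) * u) *
          Tfun l Z ((1 / 2 - Complex.I * ((Real.sqrt 3 : ℝ) : ℂ) / 6) * u) -
          NormedSpace.exp (u • (l.sum + Z))) ∘ fun t : ℝ => (t : ℂ)) t
      = S (1 / 2 + Complex.I * ((Real.sqrt 3 : ℝ) : ℂ) / 6) t *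
          S (1 / 2 - Complex.I * ((Real.sqrt 3 : ℝ) : ℂ) / 6) t -
          NormedSpace.exp ((t : ℂ) • ∑ ℓ ∈ Finset.Icc 1 N, X ℓ) := by
    intro t
    simp only [Function.comp]
    rw [hSfun _ t, hSfun _ t, hsum]
  have hright : ∀ t : ℝ, ((fun u : ℂ => ‖u‖ ^ 4) ∘ fun t : ℝ => (t : ℂ)) t = |t| ^ 4 := by
    intro t
    simp [Complex.norm_real, Real.norm_eq_abs]
  exact (hfinal.congr_left hleft).congr_right hright
end
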